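/- arXiv:2001.08375 — 14 statements merged into one kernel-verified Lean document; each statement's English description precedes it below -/
import Mathlib

section
/- Bayes' theorem for finite stochastic maps: let X and Y be finite nonempty types, let p : PMF X be a probability distribution on X, let f : X → PMF Y be a stochastic map, and let q := p.bind f be the pushforward distribution on Y. Then there exists a stochastic map g : Y → PMF X such that (g y) x * q y = (f x) y * p x for every x ∈ X and y ∈ Y. Moreover, g is q-almost-everywhere unique: if g' : Y → PMF X also satisfies (g' y) x * q y = (f x) y * p x for all x and y, then g y = g' y for every y ∈ Y with q y ≠ 0. -/
/-- **Bayes' theorem for finite stochastic maps.** Given finite nonempty types `X` and `Y`,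
a probability distribution `p` on `X`, a stochastic map `f : X → PMF Y`, and the pushforward
`q := p.bind f`, there exists a stochastic map `g : Y → PMF X` satisfying Bayes' rule
`g y x * q y = f x y * p x` for all points, and `g` is unique `q`-almost everywhere. -/
theorem bayes_theorem_finstoch
    {X Y : Type*} [Fintype X] [Nonempty X] [Fintype Y] [Nonempty Y]
    (p : PMF X) (f : X → PMF Y) (q : PMF Y) (hq : q = p.bind f) :
    ∃ g : Y → PMF X,
      (∀ (x : X) (y : Y), g y x * q y = f x y * p x) ∧
      (∀ g' : Y → PMF X,
        (∀ (x : X) (y : Y), g' y x * q y = f x y * p x) →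
        ∀ y : Y, q y ≠ 0 → g y = g' y) := by
  classical
  have hqsum : ∀ y, q y = ∑ x, f x y * p x := by
    intro y
    rw [hq, PMF.bind_apply]
    rw [tsum_fintype]
    congr 1; ext x; ring
  have hqtop : ∀ y, q y ≠ ⊤ := fun y => (q.apply_lt_top y).ne
  have hsum : ∀ y, q y ≠ 0 → ∑ x, f x y * p x / q y = 1 := by
    intro y h
    simp only [div_eq_mul_inv, ← Finset.sum_mul]
    rw [← hqsum y, ← div_eq_mul_inv, ENNReal.div_self h (hqtop y)]
  set g : Y → PMF X := fun y =>
    if h : q y = 0 then PMF.pure (Classical.arbitrary X)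
    else PMF.ofFintype (fun x => f x y * p x / q y) (hsum y h) with hg
  have hbayes : ∀ (x : X) (y : Y), g y x * q y = f x y * p x := by
    intro x y
    by_cases h : q y = 0
    · simp only [h, mul_zero]
      have := hqsum y
      rw [h] at this
      exact ((Finset.sum_eq_zero_iff.mp this.symm) x (Finset.mem_univ x)).symm
    · simp only [hg, dif_neg h, PMF.ofFintype_apply]
      exact ENNReal.div_mul_cancel h (hqtop y)
  refine ⟨g, hbayes, ?_⟩
  intro g' hg' y hy
  ext x
  have := (hbayes x y).trans (hg' x y).symm
  exact (ENNReal.mul_left_inj hy (hqtop y)).mp this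
end

section
/- Multiplication Lemma: let A and B be unital C*-algebras over ℂ and let F : B → A be an SPU map. If some b ∈ B satisfies F (star b * b) = star (F b) * F b, then F (star b * c) = star (F b) * F c and F (star c * b) = star (F c) * F b for every c ∈ B. -/
open Filter Topology in
private lemma aux_nonneg {A : Type*} [CStarAlgebra A] [PartialOrder A] [StarOrderedRing A]
    (S P : A) (h : ∀ s : ℝ, 0 < s → 0 ≤ s • S + (s ^ 2) • P) : 0 ≤ S := by
  have h' : ∀ n : ℕ, 0 ≤ S + (1 / ((n : ℝ) + 1)) • P := by
    intro n
    have hs : (0:ℝ) < 1 / ((n : ℝ) + 1) := by positivity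
    have h2 := smul_nonneg (le_of_lt (inv_pos.2 hs)) (h _ hs)
    rw [smul_add, smul_smul, smul_smul, inv_mul_cancel₀ hs.ne', one_smul] at h2
    have e : ((1 / ((n:ℝ) + 1))⁻¹ * (1 / ((n:ℝ) + 1)) ^ 2) = 1 / ((n:ℝ) + 1) := by
      field_simp
    rwa [e] at h2
  have htend : Tendsto (fun n : ℕ => S + (1 / ((n : ℝ) + 1)) • P) atTop (𝓝 S) := by
    have := ((tendsto_one_div_add_atTop_nhds_zero_nat (𝕜 := ℝ)).smul_const P).const_add S
    simpa using this
  exact CStarAlgebra.isClosed_nonneg.mem_of_tendsto htend (Eventually.of_forall h')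

private lemma aux_eq_zero {A : Type*} [CStarAlgebra A] [PartialOrder A] [StarOrderedRing A]
    (S P : A) (h : ∀ s : ℝ, s ≠ 0 → 0 ≤ s • S + (s ^ 2) • P) : S = 0 := by
  have h1 : 0 ≤ S := aux_nonneg S P fun s hs => h s hs.ne'
  have h2 : 0 ≤ -S := by
    refine aux_nonneg (-S) P fun s hs => ?_
    have := h (-s) (by linarith)
    calc (0:A) ≤ (-s) • S + ((-s) ^ 2) • P := this
    _ = s • (-S) + (s ^ 2) • P := by rw [neg_smul, smul_neg, neg_pow_two]
  exact le_antisymm (neg_nonneg.mp h2) h1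

/-- **The Multiplication Lemma.** If `F : B → A` is a Schwarz-positive unital (SPU) map
between unital C*-algebras over `ℂ` and `b ∈ B` saturates the Kadison–Schwarz inequality,
i.e. `F (star b * b) = star (F b) * F b`, then `F (star b * c) = star (F b) * F c` and
`F (star c * b) = star (F c) * F b` for every `c ∈ B`. -/
theorem multiplication_lemma
    {A B : Type*} [CStarAlgebra A] [PartialOrder A] [StarOrderedRing A] [CStarAlgebra B]
    (F : B →ₗ[ℂ] A) (hF1 : F 1 = 1)
    (hFKS : ∀ b : B, star (F b) * F b ≤ F (star b * b))
    (b : B) (hb : F (star b * b) = star (F b) * F b) :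
    ∀ c : B, F (star b * c) = star (F b) * F c ∧ F (star c * b) = star (F c) * F b := by
  intro c
  set D : A := F (star b * c) - star (F b) * F c with hD
  set D' : A := F (star c * b) - star (F c) * F b with hD'
  set P : A := F (star c * c) - star (F c) * F c with hP
  have e1 : ∀ (s : ℝ) (x : A), ((s : ℂ)) • x = s • x := fun s x => by
    rw [← Complex.coe_algebraMap, algebraMap_smul]
  have key : ∀ t : ℂ, 0 ≤ (star t) • D' + t • D + ((star t) * t) • P := by
    intro t
    have h := hFKS (b + t • c)
    rw [← sub_nonneg] at h
    convert h using 1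
    simp only [hD, hD', hP, star_add, star_smul, add_mul, mul_add, map_add, map_smul,
      smul_mul_assoc, mul_smul_comm, smul_smul, hb, smul_sub]
    module
  -- real direction : D' + D = 0
  have hS : D' + D = 0 := by
    refine aux_eq_zero _ P fun s hs => ?_
    have h := key (s : ℂ)
    rw [Complex.star_def, Complex.conj_ofReal] at h
    calc (0:A) ≤ (s : ℂ) • D' + (s : ℂ) • D + ((s : ℂ) * (s : ℂ)) • P := h
    _ = s • (D' + D) + (s ^ 2) • P := by
        rw [show ((s:ℂ) * (s:ℂ)) = ((s ^ 2 : ℝ) : ℂ) by push_cast; ring,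
          e1, e1, e1, smul_add]
  -- imaginary direction : I • (D - D') = 0
  have hT : Complex.I • (D - D') = 0 := by
    refine aux_eq_zero _ P fun s hs => ?_
    have h := key ((s : ℂ) * Complex.I)
    rw [Complex.star_def, map_mul, Complex.conj_ofReal, Complex.conj_I] at h
    calc (0:A) ≤ ((s:ℂ) * -Complex.I) • D' + ((s:ℂ) * Complex.I) • D +
        ((s:ℂ) * -Complex.I * ((s:ℂ) * Complex.I)) • P := h
    _ = s • (Complex.I • (D - D')) + (s ^ 2) • P := by
        rw [show ((s:ℂ) * -Complex.I * ((s:ℂ) * Complex.I)) = ((s ^ 2 : ℝ) : ℂ) by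
            rw [show (s:ℂ) * -Complex.I * ((s:ℂ) * Complex.I)
                = -((s:ℂ) * (s:ℂ)) * (Complex.I * Complex.I) by ring,
              Complex.I_mul_I]; push_cast; ring,
          mul_smul, mul_smul, e1, e1, e1, smul_sub]
        module
  -- conclude D = 0 and D' = 0
  have hD'neg : D' = -D := eq_neg_of_add_eq_zero_left hS
  have hDzero : D = 0 := by
    rw [hD'neg, sub_neg_eq_add, smul_add] at hT
    have h2 : ((2 : ℂ) * Complex.I) • D = 0 := by
      rw [mul_smul, two_smul]
      simpa [smul_add] using hT
    rcases smul_eq_zero.mp h2 with h | h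
    · exact absurd h (by simp [Complex.I_ne_zero])
    · exact h
  have hD'zero : D' = 0 := by rw [hD'neg, hDzero, neg_zero]
  exact ⟨sub_eq_zero.mp hDzero, sub_eq_zero.mp hD'zero⟩
end

section
/- S-positivity of Schwarz-positive unital maps: let A, B, C be unital C*-algebras over ℂ and let G : C → B and F : B → A be SPU maps such that the composite F ∘ G is multiplicative, i.e. F (G (c * c')) = F (G c) * F (G c') for all c, c' ∈ C. Then F (star (G c) * b) = star (F (G c)) * F b and F (G c * b) = F (G c) * F b for all c ∈ C and b ∈ B. -/
open Filter Topology

section aux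
variable {A : Type*} [CStarAlgebra A] [PartialOrder A] [StarOrderedRing A]

lemma my_smul_nonneg (c : ℝ) (a : A) (hc : 0 ≤ c) (ha : 0 ≤ a) : 0 ≤ c • a := by
  rcases hc.lt_or_eq with hc | rfl
  · rcases ha.lt_or_eq with ha | rfl
    · simpa using (smul_lt_smul_of_pos_left ha hc).le
    · simp
  · simp

lemma my_nonneg_of_forall (R S : A) (h : ∀ t : ℝ, 0 ≤ S + t • R) : 0 ≤ R := by
  have key : ∀ n : ℕ, 0 ≤ (((n:ℝ)+1)⁻¹) • S + R := by
    intro n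
    have h1 := my_smul_nonneg (((n:ℝ)+1)⁻¹) _ (by positivity) (h ((n:ℝ)+1))
    have h2 : ((n:ℝ)+1) ≠ 0 := by positivity
    rwa [smul_add, smul_smul, inv_mul_cancel₀ h2, one_smul] at h1
  have lim : Tendsto (fun n : ℕ => (((n:ℝ)+1)⁻¹) • S + R) atTop (𝓝 R) := by
    have h3 : Tendsto (fun n : ℕ => (((n:ℝ)+1)⁻¹)) atTop (𝓝 0) := by
      simpa [one_div] using tendsto_one_div_add_atTop_nhds_zero_nat (𝕜 := ℝ)
    simpa using (h3.smul_const S).add (tendsto_const_nhds (x := R))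
  exact ge_of_tendsto' lim key

lemma my_eq_zero_of_forall (R S : A) (h : ∀ t : ℝ, 0 ≤ S + t • R) : R = 0 := by
  have h1 : 0 ≤ R := my_nonneg_of_forall R S h
  have h2 : 0 ≤ -R := my_nonneg_of_forall (-R) S (fun t => by simpa using h (-t))
  exact le_antisymm (neg_nonneg.mp h2) h1
end aux

section spu
variable {A B : Type*}
    [CStarAlgebra A] [PartialOrder A] [StarOrderedRing A]
    [CStarAlgebra B] [PartialOrder B] [StarOrderedRing B]
    (F : B →ₗ[ℂ] A)
    (hFKS : ∀ b : B, star (F b) * F b ≤ F (star b * b))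

include hFKS

lemma my_pos (b : B) (hb : 0 ≤ b) : 0 ≤ F b := by
  have hr : star (CFC.sqrt b) * CFC.sqrt b = b := by
    rw [(IsSelfAdjoint.of_nonneg (CFC.sqrt_nonneg b)).star_eq, CFC.sqrt_mul_sqrt_self b hb]
  calc (0:A) ≤ star (F (CFC.sqrt b)) * F (CFC.sqrt b) := star_mul_self_nonneg _
    _ ≤ F (star (CFC.sqrt b) * CFC.sqrt b) := hFKS _
    _ = F b := by rw [hr]

lemma my_mono {a b : B} (hab : a ≤ b) : F a ≤ F b := by
  have := my_pos F hFKS (b - a) (sub_nonneg.mpr hab)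
  rw [map_sub] at this
  exact sub_nonneg.mp this

lemma my_sa (b : B) (hb : IsSelfAdjoint b) : IsSelfAdjoint (F b) := by
  have h1 : IsSelfAdjoint (F b⁺) := .of_nonneg (my_pos F hFKS _ (CFC.posPart_nonneg b))
  have h2 : IsSelfAdjoint (F b⁻) := .of_nonneg (my_pos F hFKS _ (CFC.negPart_nonneg b))
  have h3 : F b = F b⁺ - F b⁻ := by rw [← map_sub, CFC.posPart_sub_negPart b hb]
  rw [h3]; exact h1.sub h2

lemma my_star (b : B) : F (star b) = star (F b) := by
  have e1 : star (F (b + star b)) = F (b + star b) :=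
    (my_sa F hFKS _ (by simp [IsSelfAdjoint, add_comm])).star_eq
  have e2 : star (F (b - star b)) = - F (b - star b) := by
    have hsa : IsSelfAdjoint (Complex.I • (b - star b)) := by
      rw [IsSelfAdjoint, star_smul, star_sub, Complex.star_def, Complex.conj_I, neg_smul,
        smul_sub, smul_sub, star_star]
      abel
    have h := (my_sa F hFKS _ hsa).star_eq
    rw [map_smul, star_smul, Complex.star_def, Complex.conj_I, neg_smul] at h
    have h' := congrArg (fun z => Complex.I • z) h
    simp only [smul_neg, smul_smul, Complex.I_mul_I, neg_smul, one_smul, neg_neg] at h'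
    linear_combination (norm := module) h'
  have hb : F b = ((1:ℂ)/2) • (F (b + star b) + F (b - star b)) := by
    rw [← map_add, ← map_smul]; congr 1; module
  have hsb : F (star b) = ((1:ℂ)/2) • (F (b + star b) - F (b - star b)) := by
    rw [← map_sub, ← map_smul]; congr 1; module
  rw [hb, hsb, star_smul, star_add, e1, e2]
  have h4 : star ((1:ℂ)/2) = ((1:ℂ)/2) := by simp
  rw [h4]
  module

lemma my_key (hFst : ∀ b : B, F (star b) = star (F b)) (x : B)
    (hx : F (star x * x) = star (F x) * F x) (b : B) :
    F (star x * b) = star (F x) * F b := by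
  set T := F (star x * b) - star (F x) * F b with hT
  set S := F (star b * b) - star (F b) * F b with hS
  have hSnn : 0 ≤ S := sub_nonneg.mpr (hFKS b)
  have hTstar : star T = F (star b * x) - star (F b) * F x := by
    rw [hT, star_sub, star_mul, star_star, ← hFst, star_mul, star_star]
  have claim : ∀ z : ℂ, 0 ≤ S + z • star T + (starRingEnd ℂ z) • T := by
    intro z
    have h0 := hFKS (z • x + b)
    rw [← sub_nonneg] at h0
    have expand : F (star (z • x + b) * (z • x + b)) - star (F (z • x + b)) * F (z • x + b)
        = S + z • star T + (starRingEnd ℂ z) • T := by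
      rw [hTstar, hT, hS]
      simp only [star_add, star_smul, map_add, map_smul, add_mul, mul_add,
        smul_mul_assoc, mul_smul_comm, smul_smul, hx, Complex.star_def]
      module
    rw [expand] at h0
    exact h0
  have hR1 : star T + T = 0 := by
    apply my_eq_zero_of_forall (star T + T) S
    intro t
    have h5 := claim (t : ℂ)
    rw [Complex.conj_ofReal, Complex.coe_smul, Complex.coe_smul] at h5
    rwa [smul_add, ← add_assoc]
  have hR2 : Complex.I • star T - Complex.I • T = 0 := by
    apply my_eq_zero_of_forall _ S
    intro t
    have h5 := claim ((t : ℂ) * Complex.I)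
    rw [map_mul, Complex.conj_ofReal, Complex.conj_I] at h5
    have he : S + ((t:ℂ) * Complex.I) • star T + ((t:ℂ) * -Complex.I) • T
        = S + t • (Complex.I • star T - Complex.I • T) := by
      rw [← Complex.coe_smul (x := t)]
      module
    rwa [he] at h5
  have hTT : star T = T := by
    have h6 := congrArg (fun z => (-Complex.I) • z) hR2
    simp only [smul_sub, smul_smul, neg_mul, Complex.I_mul_I, neg_neg, one_smul, smul_zero] at h6
    exact sub_eq_zero.mp h6
  have hT0 : T = 0 := by
    rw [hTT] at hR1
    have h7 : T = ((1:ℂ)/2) • (T + T) := by module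
    rw [hR1, smul_zero] at h7
    exact h7
  rw [hT, sub_eq_zero] at hT0
  exact hT0
end spu


/-- **S-positivity of Schwarz-positive unital maps.** If `G : C → B` and `F : B → A` are SPU
maps between unital C*-algebras over `ℂ` such that `F ∘ G` is multiplicative, then
`F (star (G c) * b) = star (F (G c)) * F b` and `F (G c * b) = F (G c) * F b`
for all `c ∈ C` and `b ∈ B`. -/
theorem spu_is_S_positive
    {A B C : Type*}
    [CStarAlgebra A] [PartialOrder A] [StarOrderedRing A]
    [CStarAlgebra B] [PartialOrder B] [StarOrderedRing B]
    [CStarAlgebra C]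
    (G : C →ₗ[ℂ] B) (hG1 : G 1 = 1)
    (hGKS : ∀ c : C, star (G c) * G c ≤ G (star c * c))
    (F : B →ₗ[ℂ] A) (hF1 : F 1 = 1)
    (hFKS : ∀ b : B, star (F b) * F b ≤ F (star b * b))
    (hmul : ∀ c c' : C, F (G (c * c')) = F (G c) * F (G c')) :
    ∀ (c : C) (b : B),
      F (star (G c) * b) = star (F (G c)) * F b ∧ F (G c * b) = F (G c) * F b := by
  have hFst := my_star F hFKS
  letI := CStarAlgebra.spectralOrder C
  letI := CStarAlgebra.spectralOrderedRing C
  have hGst := my_star G hGKS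
  have hFG : ∀ c : C, F (G (star c)) = star (F (G c)) := fun c => by rw [hGst, hFst]
  have hx : ∀ c : C, F (star (G c) * G c) = star (F (G c)) * F (G c) := by
    intro c
    refine le_antisymm ?_ (hFKS (G c))
    calc F (star (G c) * G c) ≤ F (G (star c * c)) := my_mono F hFKS (hGKS c)
      _ = F (G (star c)) * F (G c) := hmul (star c) c
      _ = star (F (G c)) * F (G c) := by rw [hFG]
  intro c b
  constructor
  · exact my_key F hFKS hFst (G c) (hx c) b
  · have h1 := my_key F hFKS hFst (G (star c)) (hx (star c)) b
    rw [hGst, star_star, hFst, star_star] at h1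
    exact h1
end

section
/- Invertible SPU maps are ⋆-homomorphisms: let A and B be unital C*-algebras over ℂ and let F : B → A and G : A → B be SPU maps such that G (F b) = b for all b ∈ B and F (G a) = a for all a ∈ A. Then F is multiplicative: F (b * b') = F b * F b' for all b, b' ∈ B (so F is a unital ⋆-algebra isomorphism with inverse G). -/
private lemma spu_nonneg' {A B : Type*}
    [CStarAlgebra A] [PartialOrder A] [StarOrderedRing A]
    [CStarAlgebra B] [PartialOrder B] [StarOrderedRing B]
    (F : B →ₗ[ℂ] A)
    (hFKS : ∀ b : B, star (F b) * F b ≤ F (star b * b))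
    {b : B} (hb : 0 ≤ b) : 0 ≤ F b := by
  rw [StarOrderedRing.nonneg_iff] at hb
  induction hb using AddSubmonoid.closure_induction with
  | mem x hx =>
    obtain ⟨s, rfl⟩ := hx
    exact le_trans (star_mul_self_nonneg (F s)) (hFKS s)
  | zero => simp
  | add x y hx hy px py => rw [map_add]; exact add_nonneg px py

private lemma spu_mono' {A B : Type*}
    [CStarAlgebra A] [PartialOrder A] [StarOrderedRing A]
    [CStarAlgebra B] [PartialOrder B] [StarOrderedRing B]
    (F : B →ₗ[ℂ] A)
    (hFKS : ∀ b : B, star (F b) * F b ≤ F (star b * b))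
    {x y : B} (h : x ≤ y) : F x ≤ F y := by
  have := spu_nonneg' F hFKS (sub_nonneg.mpr h)
  rw [map_sub, sub_nonneg] at this
  exact this

private lemma spu_selfAdjoint' {A B : Type*}
    [CStarAlgebra A] [PartialOrder A] [StarOrderedRing A]
    [CStarAlgebra B] [PartialOrder B] [StarOrderedRing B]
    (F : B →ₗ[ℂ] A) (hF1 : F 1 = 1)
    (hFKS : ∀ b : B, star (F b) * F b ≤ F (star b * b))
    {x : B} (hx : IsSelfAdjoint x) : IsSelfAdjoint (F x) := by
  have h1 : (0 : B) ≤ x + algebraMap ℝ B ‖x‖ := by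
    have := hx.neg_algebraMap_norm_le_self
    rw [neg_le_iff_add_nonneg] at this
    exact this
  have hc : F (x + algebraMap ℝ B ‖x‖) = F x + algebraMap ℝ A ‖x‖ := by
    rw [map_add, Algebra.algebraMap_eq_smul_one, Algebra.algebraMap_eq_smul_one,
      LinearMap.map_smul_of_tower, hF1]
  have h2 : (0 : A) ≤ F x + algebraMap ℝ A ‖x‖ := by
    rw [← hc]; exact spu_nonneg' F hFKS h1
  have h3 : IsSelfAdjoint (F x + algebraMap ℝ A ‖x‖) := .of_nonneg h2
  have h4 : IsSelfAdjoint (algebraMap ℝ A ‖x‖) := IsSelfAdjoint.algebraMap A (.all _)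
  simpa using h3.sub h4

private lemma spu_star' {A B : Type*}
    [CStarAlgebra A] [PartialOrder A] [StarOrderedRing A]
    [CStarAlgebra B] [PartialOrder B] [StarOrderedRing B]
    (F : B →ₗ[ℂ] A) (hF1 : F 1 = 1)
    (hFKS : ∀ b : B, star (F b) * F b ≤ F (star b * b))
    (b : B) : F (star b) = star (F b) := by
  set x : B := b + star b with hxdef
  set y : B := Complex.I • (b - star b) with hydef
  have hxsa : IsSelfAdjoint x := by
    simp [hxdef, IsSelfAdjoint, star_add, add_comm]
  have hysa : IsSelfAdjoint y := by
    simp only [hydef, IsSelfAdjoint, star_smul, Complex.star_def, Complex.conj_I, star_sub,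
      star_star, neg_smul, smul_sub, neg_sub]
    abel
  have hFx : IsSelfAdjoint (F x) := spu_selfAdjoint' F hF1 hFKS hxsa
  have hFy : IsSelfAdjoint (F y) := spu_selfAdjoint' F hF1 hFKS hysa
  have h2b : x - Complex.I • y = (2 : ℂ) • b := by
    simp only [hydef, smul_smul, Complex.I_mul_I, neg_smul, one_smul, sub_neg_eq_add, hxdef]
    module
  have hsb : x + Complex.I • y = (2 : ℂ) • star b := by
    simp only [hydef, smul_smul, Complex.I_mul_I, neg_smul, one_smul, hxdef]
    module
  have key : (2 : ℂ) • F (star b) = (2 : ℂ) • star (F b) := by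
    have l1 : (2 : ℂ) • F (star b) = F x + Complex.I • F y := by
      rw [← map_smul, ← hsb, map_add, map_smul]
    have l2 : (2 : ℂ) • star (F b) = star ((2 : ℂ) • F b) := by
      rw [star_smul]
      simp
    have l3 : (2 : ℂ) • F b = F x - Complex.I • F y := by
      rw [← map_smul, ← h2b, map_sub, map_smul]
    rw [l1, l2, l3, star_sub, star_smul, Complex.star_def, Complex.conj_I,
      hFx.star_eq, hFy.star_eq, neg_smul, sub_neg_eq_add]
  exact smul_right_injective A two_ne_zero key

/-- **Invertible SPU maps are ⋆-homomorphisms.** If `F : B → A` and `G : A → B` are SPU maps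
between unital C*-algebras over `ℂ` that are mutually inverse, then `F` is multiplicative. -/
theorem invertible_spu_is_deterministic
    {A B : Type*}
    [CStarAlgebra A] [PartialOrder A] [StarOrderedRing A]
    [CStarAlgebra B] [PartialOrder B] [StarOrderedRing B]
    (F : B →ₗ[ℂ] A) (hF1 : F 1 = 1)
    (hFKS : ∀ b : B, star (F b) * F b ≤ F (star b * b))
    (G : A →ₗ[ℂ] B) (hG1 : G 1 = 1)
    (hGKS : ∀ a : A, star (G a) * G a ≤ G (star a * a))
    (hGF : ∀ b : B, G (F b) = b) (hFG : ∀ a : A, F (G a) = a) :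
    ∀ b b' : B, F (b * b') = F b * F b' := by
  -- Step 1: equality in the Schwarz inequality for F.
  have key : ∀ b : B, F (star b * b) = star (F b) * F b := by
    intro b
    have h1 : G (star (F b) * F b) ≤ star b * b := by
      have := spu_mono' G hGKS (hFKS b)
      rwa [hGF] at this
    have h2 : star b * b ≤ G (star (F b) * F b) := by
      have := hGKS (F b)
      rwa [hGF] at this
    have h3 : G (star (F b) * F b) = star b * b := le_antisymm h1 h2
    have h4 := congrArg F h3
    rw [hFG] at h4
    exact h4.symm
  -- Step 2: polarization.
  have e : ∀ c c' : B,
      F (star c * c') + F (star c' * c) = star (F c) * F c' + star (F c') * F c := by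
    intro c c'
    have h := key (c + c')
    simp only [star_add, add_mul, mul_add, map_add] at h
    linear_combination (norm := module) h - key c - key c'
  intro b b'
  have e1 := e (star b) b'
  have e2 : F (b * b') - F (star b' * star b) =
      star (F (star b)) * F b' - star (F b') * F (star b) := by
    have h := e (star b) (Complex.I • b')
    simp only [star_star, star_smul, Complex.star_def, Complex.conj_I, neg_smul, neg_mul,
      mul_smul_comm, smul_mul_assoc, map_neg, map_smul] at h
    have h2 := congrArg (fun z => (-Complex.I) • z) h
    simp only [smul_add, smul_neg, smul_smul, neg_mul, Complex.I_mul_I, neg_neg, one_smul,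
      neg_smul] at h2
    linear_combination (norm := module) h2
  rw [star_star] at e1
  have hst : F (star b) = star (F b) := spu_star' F hF1 hFKS b
  rw [hst, star_star] at e1 e2
  have h2 : (2 : ℂ) • F (b * b') = (2 : ℂ) • (F b * F b') := by
    linear_combination (norm := module) e1 + e2
  exact smul_right_injective A two_ne_zero h2
end

section
/- Universal no-broadcasting for matrix algebras: let n ≥ 2. There is no linear map μ : Matrix (Fin n × Fin n) (Fin n × Fin n) ℂ → Matrix (Fin n) (Fin n) ℂ satisfying all of the following: (i) the Kadison–Schwarz inequality, i.e. the matrix μ (xᴴ * x) − (μ x)ᴴ * (μ x) is positive semidefinite for every x; (ii) μ (a ⊗ₖ 1) = a for every a ∈ Matrix (Fin n) (Fin n) ℂ; (iii) μ (1 ⊗ₖ a) = a for every a ∈ Matrix (Fin n) (Fin n) ℂ. -/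
open Matrix Kronecker
open scoped ComplexOrder

private lemma quad_r' {r c : ℝ} (hc : 0 ≤ c)
    (h : ∀ t : ℝ, 0 ≤ t * r + t ^ 2 * c) : r = 0 := by
  by_contra hr
  have hcp : (0:ℝ) < c + 1 := by linarith
  have h1 := h (-r / (c + 1))
  have e : (-r / (c + 1)) * r + (-r / (c + 1)) ^ 2 * c = -(r^2) / (c+1)^2 := by
    field_simp; ring
  rw [e, le_div_iff₀ (by positivity)] at h1
  have h3 : (0:ℝ) < r ^ 2 := by positivity
  linarith

private lemma schwarz_eq {m k : Type*} [Fintype m] [DecidableEq m] [Fintype k] [DecidableEq k]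
    (μ : Matrix m m ℂ →ₗ[ℂ] Matrix k k ℂ)
    (hKS : ∀ x, (μ (xᴴ * x) - (μ x)ᴴ * (μ x)).PosSemidef)
    (a : Matrix m m ℂ) (ha : μ (aᴴ * a) = (μ a)ᴴ * (μ a))
    (y : Matrix m m ℂ) (v : k → ℂ) :
    star v ⬝ᵥ ((μ (aᴴ * y) - (μ a)ᴴ * (μ y)) *ᵥ v) = 0 := by
  set B : Matrix m m ℂ → Matrix m m ℂ → ℂ :=
    fun x z => star v ⬝ᵥ ((μ (xᴴ * z) - (μ x)ᴴ * (μ z)) *ᵥ v) with hB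
  have hBaa : B a a = 0 := by simp [hB, ha]
  have hnn : ∀ x, 0 ≤ B x x := fun x => (hKS x).dotProduct_mulVec_nonneg v
  have hexp : ∀ c : ℂ, B (a + c • y) (a + c • y)
      = c * B a y + star c * B y a + (c * star c) * B y y := by
    intro c
    have hm : μ ((a + c • y)ᴴ * (a + c • y)) - (μ (a + c • y))ᴴ * μ (a + c • y)
        = (μ (aᴴ * a) - (μ a)ᴴ * μ a)
          + c • (μ (aᴴ * y) - (μ a)ᴴ * μ y)
          + star c • (μ (yᴴ * a) - (μ y)ᴴ * μ a)
          + (c * star c) • (μ (yᴴ * y) - (μ y)ᴴ * μ y) := by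
      simp only [conjTranspose_add, conjTranspose_smul, add_mul, mul_add, map_add, _root_.map_smul,
        smul_mul_assoc, mul_smul_comm, smul_smul]
      module
    simp only [hB, hm]
    have h0 : μ (aᴴ * a) - (μ a)ᴴ * μ a = 0 := by rw [ha]; simp
    rw [h0]
    simp only [add_mulVec, smul_mulVec, dotProduct_add, dotProduct_smul, zero_mulVec,
      dotProduct_zero, smul_eq_mul]
    ring
  -- now extract
  set A := B a y with hA
  set Bb := B y a with hBb
  set C := B y y with hC
  have hCnn : 0 ≤ C := hnn y
  have hCre : 0 ≤ C.re := (Complex.le_def.mp hCnn).1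
  have hCim : C.im = 0 := ((Complex.le_def.mp hCnn).2).symm
  have key : ∀ c : ℂ, 0 ≤ c * A + star c * Bb + (c * star c) * C := by
    intro c
    have := hnn (a + c • y)
    rwa [hexp c] at this
  have h1 : ∀ t : ℝ, 0 ≤ t * (A + Bb).re + t ^ 2 * C.re ∧ t * (A + Bb).im + t ^ 2 * C.im = 0 := by
    intro t
    have := key (t : ℂ)
    rw [Complex.le_def] at this
    constructor
    · have := this.1; simp [Complex.add_re, Complex.mul_re, Complex.ofReal_re,
        Complex.ofReal_im] at this ⊢; ring_nf at this ⊢; linarith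
    · have := this.2; simp [Complex.add_im, Complex.mul_im, Complex.ofReal_re,
        Complex.ofReal_im] at this ⊢; ring_nf at this ⊢; linarith
  have h2 : ∀ t : ℝ, 0 ≤ t * (-(A - Bb).im) + t ^ 2 * C.re ∧ t * (A - Bb).re + t ^ 2 * C.im = 0 := by
    intro t
    have hk := key ((t : ℂ) * Complex.I)
    rw [Complex.le_def] at hk
    constructor
    · have := hk.1; simp [Complex.mul_re, Complex.mul_im] at this ⊢; ring_nf at this ⊢; linarith
    · have := hk.2; simp [Complex.mul_re, Complex.mul_im] at this ⊢; ring_nf at this ⊢; linarith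
  have e1 : (A + Bb).im = 0 := by have := (h1 1).2; simp [hCim] at this; simpa using this
  have e2 : (A + Bb).re = 0 := quad_r' hCre (fun t => (h1 t).1)
  have e3 : (A - Bb).re = 0 := by have := (h2 1).2; simp [hCim] at this; simpa using this
  have e4 : (A - Bb).im = 0 := by
    have h5 := quad_r' hCre (fun t => (h2 t).1)
    have : -(A - Bb).im = 0 := h5
    linarith [Complex.sub_im A Bb, this]
  have : A = 0 := by
    apply Complex.ext <;>
      simp only [Complex.add_re, Complex.add_im, Complex.sub_re, Complex.sub_im,
        Complex.zero_re, Complex.zero_im] at e1 e2 e3 e4 ⊢ <;> linarith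
  exact this

private lemma kron_conjT {n : ℕ} (a b : Matrix (Fin n) (Fin n) ℂ) :
    (a ⊗ₖ b)ᴴ = aᴴ ⊗ₖ bᴴ := by
  ext ⟨i, j⟩ ⟨k, l⟩
  simp [conjTranspose_apply, kroneckerMap_apply, star_mul', mul_comm]


/-- **Universal no-broadcasting theorem for matrix algebras.** For `n ≥ 2` there is no linear
map `μ : Mₙ(ℂ) ⊗ Mₙ(ℂ) → Mₙ(ℂ)` (with the tensor product realized via the Kronecker product)
that satisfies the Kadison–Schwarz inequality and restricts to the identity on both tensor
factors, i.e. `μ (a ⊗ₖ 1) = a = μ (1 ⊗ₖ a)` for all `a`. -/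
theorem no_broadcasting_matrix (n : ℕ) (hn : 2 ≤ n) :
    ¬ ∃ μ : Matrix (Fin n × Fin n) (Fin n × Fin n) ℂ →ₗ[ℂ] Matrix (Fin n) (Fin n) ℂ,
        (∀ x : Matrix (Fin n × Fin n) (Fin n × Fin n) ℂ,
          (μ (xᴴ * x) - (μ x)ᴴ * (μ x)).PosSemidef) ∧
        (∀ a : Matrix (Fin n) (Fin n) ℂ, μ (a ⊗ₖ (1 : Matrix (Fin n) (Fin n) ℂ)) = a) ∧
        (∀ a : Matrix (Fin n) (Fin n) ℂ, μ ((1 : Matrix (Fin n) (Fin n) ℂ) ⊗ₖ a) = a) := by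
  rintro ⟨μ, hKS, hL, hR⟩
  set i0 : Fin n := ⟨0, by omega⟩ with hi0
  set i1 : Fin n := ⟨1, by omega⟩ with hi1
  have hne : i0 ≠ i1 := by simp [hi0, hi1, Fin.ext_iff]
  set v : Fin n → ℂ := Pi.single i0 1 with hv
  have hdot : ∀ M : Matrix (Fin n) (Fin n) ℂ, star v ⬝ᵥ (M *ᵥ v) = M i0 i0 := by
    intro M
    have hsv : star v = v := by
      ext i; simp [hv, Pi.single_apply, apply_ite (star : ℂ → ℂ)]
    rw [hsv, hv, mulVec_single, single_dotProduct]
    simp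
  -- Fact 1 : μ (p ⊗ₖ q) i0 i0 = (p * q) i0 i0
  have F1 : ∀ p q : Matrix (Fin n) (Fin n) ℂ, μ (p ⊗ₖ q) i0 i0 = (p * q) i0 i0 := by
    intro p q
    have ha : μ ((pᴴ ⊗ₖ (1 : Matrix (Fin n) (Fin n) ℂ))ᴴ * (pᴴ ⊗ₖ 1))
        = (μ (pᴴ ⊗ₖ 1))ᴴ * μ (pᴴ ⊗ₖ 1) := by
      rw [kron_conjT, conjTranspose_conjTranspose, conjTranspose_one,
        ← mul_kronecker_mul, one_mul, hL, hL, conjTranspose_conjTranspose]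
    have key := schwarz_eq μ hKS (pᴴ ⊗ₖ 1) ha (1 ⊗ₖ q) v
    rw [kron_conjT, conjTranspose_conjTranspose, conjTranspose_one,
      ← mul_kronecker_mul, mul_one, one_mul, hL, hR, hdot] at key
    have := sub_eq_zero.mp key
    simpa [Matrix.sub_apply] using sub_eq_zero.mp (by simpa [Matrix.sub_apply] using key)
  -- Fact 2 : μ (p ⊗ₖ q) i0 i0 = (q * p) i0 i0
  have F2 : ∀ p q : Matrix (Fin n) (Fin n) ℂ, μ (p ⊗ₖ q) i0 i0 = (q * p) i0 i0 := by
    intro p q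
    have ha : μ (((1 : Matrix (Fin n) (Fin n) ℂ) ⊗ₖ qᴴ)ᴴ * (1 ⊗ₖ qᴴ))
        = (μ (1 ⊗ₖ qᴴ))ᴴ * μ (1 ⊗ₖ qᴴ) := by
      rw [kron_conjT, conjTranspose_conjTranspose, conjTranspose_one,
        ← mul_kronecker_mul, one_mul, hR, hR, conjTranspose_conjTranspose]
    have key := schwarz_eq μ hKS (1 ⊗ₖ qᴴ) ha (p ⊗ₖ 1) v
    rw [kron_conjT, conjTranspose_conjTranspose, conjTranspose_one,
      ← mul_kronecker_mul, mul_one, one_mul, hR, hL, hdot] at key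
    simpa [Matrix.sub_apply] using sub_eq_zero.mp (by simpa [Matrix.sub_apply] using key)
  -- contradiction with matrix units
  set p := Matrix.single i0 i1 (1 : ℂ)
  set q := Matrix.single i1 i0 (1 : ℂ)
  have h1 := F1 p q
  have h2 := F2 p q
  rw [h1] at h2
  rw [Matrix.single_mul_single_same, Matrix.single_mul_single_same] at h2
  simp [Matrix.single_apply_same, Matrix.single, hne, Ne.symm hne] at h2
end

section
/- Weak a.e. Multiplication Lemma: let A, B, C be unital C*-algebras over ℂ, let ω : A → C be an SPU map, and let F : B → A be a linear map. If F (star b * b) − star (F b) * F b ∈ N_ω for every b ∈ B, then F (star b * c) − star (F b) * F c ∈ N_ω for all b, c ∈ B (i.e. F is right ω-a.e. deterministic). -/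
/-- **The weak a.e. Multiplication Lemma.** Let `ω : A → C` be an SPU map between unital
C*-algebras over `ℂ` and `F : B → A` a linear map. If `F (star b * b) - star (F b) * F b`
lies in the right nullspace `N_ω = {a | ω (star a * a) = 0}` for every `b ∈ B`, then
`F (star b * c) - star (F b) * F c ∈ N_ω` for all `b, c ∈ B`, i.e. `F` is right `ω`-a.e.
deterministic. -/
theorem weak_ae_multiplication_lemma
    {A B C : Type*}
    [CStarAlgebra A] [CStarAlgebra B]
    [CStarAlgebra C] [PartialOrder C] [StarOrderedRing C]
    (ω : A →ₗ[ℂ] C) (hω1 : ω 1 = 1)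
    (hωKS : ∀ a : A, star (ω a) * ω a ≤ ω (star a * a))
    (F : B →ₗ[ℂ] A)
    (hdiag : ∀ b : B,
      ω (star (F (star b * b) - star (F b) * F b) * (F (star b * b) - star (F b) * F b)) = 0) :
    ∀ b c : B,
      ω (star (F (star b * c) - star (F b) * F c) * (F (star b * c) - star (F b) * F c)) = 0 := by
  have hpos : ∀ a : A, 0 ≤ ω (star a * a) := fun a =>
    le_trans (star_mul_self_nonneg (ω a)) (hωKS a)
  have hN_smul : ∀ (z : ℂ) (x : A), ω (star x * x) = 0 →
      ω (star (z • x) * (z • x)) = 0 := by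
    intro z x hx
    have h : star (z • x) * (z • x) = (star z * z) • (star x * x) := by
      rw [star_smul, smul_mul_smul_comm]
    rw [h, map_smul, hx, smul_zero]
  have hN_add : ∀ x y : A, ω (star x * x) = 0 → ω (star y * y) = 0 →
      ω (star (x + y) * (x + y)) = 0 := by
    intro x y hx hy
    have hid : star (x + y) * (x + y) + star (x - y) * (x - y)
        = (star x * x + star x * x) + (star y * y + star y * y) := by
      simp only [star_add, star_sub]; noncomm_ring
    have hsum : ω (star (x+y)*(x+y)) + ω (star (x-y)*(x-y)) = 0 := by
      rw [← map_add, hid]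
      simp [map_add, hx, hy]
    exact (add_eq_zero_iff_of_nonneg (hpos (x+y)) (hpos (x-y))).mp hsum |>.1
  intro b c
  have hpol : F (star b * c) - star (F b) * F c =
      (4:ℂ)⁻¹ • (((F (star (b+c) * (b+c)) - star (F (b+c)) * F (b+c))
          - (F (star (b-c) * (b-c)) - star (F (b-c)) * F (b-c)))
        + ((-Complex.I) • (F (star (b + Complex.I • c) * (b + Complex.I • c))
              - star (F (b + Complex.I • c)) * F (b + Complex.I • c))
          + Complex.I • (F (star (b - Complex.I • c) * (b - Complex.I • c))
              - star (F (b - Complex.I • c)) * F (b - Complex.I • c)))) := by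
    simp only [star_add, star_sub, star_smul, Complex.conj_I, map_add, map_sub, map_smul,
      mul_add, add_mul, mul_sub, sub_mul, smul_mul_assoc, mul_smul_comm, smul_smul,
      neg_smul, smul_neg, neg_mul, mul_neg, Complex.I_mul_I, neg_neg, one_smul]
    match_scalars <;> simp [Complex.I_sq] <;> ring_nf
  have hN_sub : ∀ x y : A, ω (star x * x) = 0 → ω (star y * y) = 0 →
      ω (star (x - y) * (x - y)) = 0 := by
    intro x y hx hy
    rw [sub_eq_add_neg]
    refine hN_add _ _ hx ?_
    simpa [star_neg, neg_mul_neg] using hy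
  rw [hpol]
  exact hN_smul _ _ (hN_add _ _
    (hN_sub _ _ (hdiag (b+c)) (hdiag (b-c)))
    (hN_add _ _ (hN_smul _ _ (hdiag _)) (hN_smul _ _ (hdiag _))))
end

section
/- SPU maps are deterministically reasonable: let A, B, C be unital C*-algebras over ℂ, let ω : A → C and F : B → A be SPU maps, and let G : B → A be a unital ⋆-algebra homomorphism such that F b − G b ∈ N_ω for every b ∈ B (F is ω-a.e. equivalent to the deterministic map G). Then F is right ω-a.e. deterministic: F (star b * c) − star (F b) * F c ∈ N_ω for all b, c ∈ B. -/
open Complex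

section SPUAux

variable {A C : Type*}
    [CStarAlgebra A] [PartialOrder A] [StarOrderedRing A]
    [CStarAlgebra C] [PartialOrder C] [StarOrderedRing C]

/-- A Schwarz-positive map is positive. -/
private lemma spu_nonneg (ω : A →ₗ[ℂ] C)
    (hωKS : ∀ a : A, star (ω a) * ω a ≤ ω (star a * a)) {x : A} (hx : 0 ≤ x) :
    0 ≤ ω x := by
  rw [StarOrderedRing.nonneg_iff] at hx
  refine AddSubmonoid.closure_induction (fun y hy => ?_) (by simp)
    (fun y z _ _ hy hz => by rw [map_add]; exact add_nonneg hy hz) hx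
  obtain ⟨s, rfl⟩ := hy
  exact le_trans (star_mul_self_nonneg _) (hωKS s)

/-- Scaling a nonnegative element by a nonnegative real keeps it nonnegative. -/
private lemma csmul_nonneg' {r : ℝ} (hr : 0 ≤ r) {x : C} (hx : 0 ≤ x) :
    0 ≤ (r : ℂ) • x := by
  rw [StarOrderedRing.nonneg_iff] at hx
  refine AddSubmonoid.closure_induction (fun y hy => ?_) (by simp)
    (fun y z _ _ hy hz => by rw [smul_add]; exact add_nonneg hy hz) hx
  obtain ⟨s, rfl⟩ := hy
  have : (r : ℂ) • (star s * s)
      = star (((Real.sqrt r : ℝ) : ℂ) • s) * (((Real.sqrt r : ℝ) : ℂ) • s) := by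
    rw [star_smul, smul_mul_smul_comm, star_def, Complex.conj_ofReal,
      ← Complex.ofReal_mul, Real.mul_self_sqrt hr]
  rw [this]
  exact star_mul_self_nonneg _

/-- If `0 ≤ r • h + r² • q` for all real `r`, with `q ≥ 0`, then `h = 0`. -/
private lemma key_cancel {h q : C} (hq : 0 ≤ q)
    (hyp : ∀ r : ℝ, 0 ≤ (r : ℂ) • h + ((r ^ 2 : ℝ) : ℂ) • q) : h = 0 := by
  have main : ∀ s : ℝ, 0 < s → 0 ≤ h + (s : ℂ) • q ∧ 0 ≤ -h + (s : ℂ) • q := by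
    intro s hs
    constructor
    · have h1 := hyp s
      have h2 := csmul_nonneg' (le_of_lt (inv_pos.mpr hs)) h1
      rw [smul_add, smul_smul, smul_smul, ← Complex.ofReal_mul, ← Complex.ofReal_mul,
        inv_mul_cancel₀ hs.ne', pow_two, ← mul_assoc, inv_mul_cancel₀ hs.ne', one_mul,
        Complex.ofReal_one, one_smul] at h2
      exact h2
    · have h1 := hyp (-s)
      have h2 := csmul_nonneg' (le_of_lt (inv_pos.mpr hs)) h1
      rw [smul_add, smul_smul, smul_smul, ← Complex.ofReal_mul, ← Complex.ofReal_mul] at h2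
      rw [show s⁻¹ * -s = -1 by field_simp, show s⁻¹ * (-s) ^ 2 = s by
        rw [neg_sq, pow_two, ← mul_assoc, inv_mul_cancel₀ hs.ne', one_mul]] at h2
      rwa [show ((-1 : ℝ) : ℂ) = -1 by norm_num, neg_one_smul] at h2
  have hnorm : ∀ s : ℝ, 0 < s → ‖h‖ ≤ 3 * s * ‖q‖ := by
    intro s hs
    obtain ⟨h1, h2⟩ := main s hs
    have hle : h + (s : ℂ) • q ≤ ((2 * s : ℝ) : ℂ) • q := by
      rw [← sub_nonneg]
      have : ((2 * s : ℝ) : ℂ) • q - (h + (s : ℂ) • q) = -h + (s : ℂ) • q := by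
        push_cast; module
      rw [this]; exact h2
    have hn1 : ‖h + (s : ℂ) • q‖ ≤ ‖((2 * s : ℝ) : ℂ) • q‖ :=
      CStarAlgebra.norm_le_norm_of_nonneg_of_le h1 hle
    have e1 : ‖((2 * s : ℝ) : ℂ) • q‖ = 2 * s * ‖q‖ := by
      rw [norm_smul]; simp [abs_of_pos hs]; try ring
    have e2 : ‖(s : ℂ) • q‖ = s * ‖q‖ := by
      rw [norm_smul]; simp [abs_of_pos hs]; try ring
    calc ‖h‖ = ‖(h + (s : ℂ) • q) - (s : ℂ) • q‖ := by rw [add_sub_cancel_right]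
      _ ≤ ‖h + (s : ℂ) • q‖ + ‖(s : ℂ) • q‖ := norm_sub_le _ _
      _ ≤ 2 * s * ‖q‖ + s * ‖q‖ := by rw [← e1, ← e2]; exact add_le_add hn1 le_rfl
      _ = 3 * s * ‖q‖ := by ring
  have hnz : ‖h‖ ≤ 0 := by
    refine le_of_forall_pos_le_add fun ε hε => ?_
    have hs : (0 : ℝ) < ε / (3 * (‖q‖ + 1)) := by positivity
    have := hnorm _ hs
    have hq0 : (0 : ℝ) ≤ ‖q‖ := norm_nonneg q
    calc ‖h‖ ≤ 3 * (ε / (3 * (‖q‖ + 1))) * ‖q‖ := this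
      _ = ε * (3 * ‖q‖) / (3 * (‖q‖ + 1)) := by ring
      _ ≤ ε := by rw [div_le_iff₀ (by positivity)]; nlinarith
      _ ≤ 0 + ε := by linarith
  exact norm_le_zero_iff.mp hnz

/-- Elements of the right nullspace of a Schwarz-positive map pair to zero with everything. -/
private lemma null_pair (ω : A →ₗ[ℂ] C)
    (hωKS : ∀ a : A, star (ω a) * ω a ≤ ω (star a * a))
    {n : A} (hn : ω (star n * n) = 0) (a : A) :
    ω (star n * a) = 0 ∧ ω (star a * n) = 0 := by
  set z := ω (star n * a) with hz
  set w := ω (star a * n) with hw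
  set q := ω (star a * a) with hqdef
  have hq : 0 ≤ q := spu_nonneg ω hωKS (star_mul_self_nonneg a)
  have expand : ∀ t : ℂ,
      0 ≤ t • z + (starRingEnd ℂ) t • w + ((starRingEnd ℂ) t * t) • q := by
    intro t
    have h0 : 0 ≤ ω (star (n + t • a) * (n + t • a)) :=
      spu_nonneg ω hωKS (star_mul_self_nonneg _)
    have key : star (n + t • a) * (n + t • a)
        = star n * n + t • (star n * a) + (starRingEnd ℂ) t • (star a * n)
          + ((starRingEnd ℂ) t * t) • (star a * a) := by
      rw [star_add, star_smul]
      simp only [add_mul, mul_add, smul_mul_assoc, mul_smul_comm, smul_smul, star_def]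
      module
    rw [key, map_add, map_add, map_add, map_smul, map_smul, map_smul, hn, zero_add] at h0
    exact h0
  have hsum : z + w = 0 := by
    refine key_cancel hq fun r => ?_
    have := expand (r : ℂ)
    rw [Complex.conj_ofReal] at this
    have e : (r : ℂ) • z + (r : ℂ) • w + ((r : ℂ) * (r : ℂ)) • q
        = (r : ℂ) • (z + w) + ((r ^ 2 : ℝ) : ℂ) • q := by push_cast; module
    rwa [e] at this
  have hdiff : I • z - I • w = 0 := by
    refine key_cancel hq fun r => ?_
    have := expand ((r : ℂ) * I)
    rw [map_mul, Complex.conj_ofReal, Complex.conj_I] at this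
    have e : ((r : ℂ) * I) • z + ((r : ℂ) * -I) • w + ((r : ℂ) * -I * ((r : ℂ) * I)) • q
        = (r : ℂ) • (I • z - I • w) + ((r ^ 2 : ℝ) : ℂ) • q := by
      have : (r : ℂ) * -I * ((r : ℂ) * I) = ((r ^ 2 : ℝ) : ℂ) := by
        push_cast; ring_nf; rw [Complex.I_sq]; ring
      rw [this]; push_cast; module
    rwa [e] at this
  have hzw : z = w := by
    have : I • (z - w) = 0 := by rw [smul_sub]; exact hdiff
    rcases smul_eq_zero.mp this with h | h
    · exact absurd h I_ne_zero
    · exact sub_eq_zero.mp h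
  have hz0 : z = 0 := by
    have : z + z = 0 := by rw [← hzw] at hsum; exact hsum
    have h2 : (2 : ℂ) • z = 0 := by rw [two_smul]; exact this
    simpa using smul_eq_zero.mp h2
  exact ⟨hz0, hzw ▸ hz0⟩

/-- Expansion of `star (u + I • v) * (u + I • v)`. -/
private lemma star_add_I_smul_mul {D : Type*} [Ring D] [StarRing D] [Module ℂ D]
    [StarModule ℂ D] [IsScalarTower ℂ D D] [SMulCommClass ℂ D D] (u v : D) :
    star (u + (I : ℂ) • v) * (u + (I : ℂ) • v)
      = star u * u + I • (star u * v) - I • (star v * u) + star v * v := by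
  rw [star_add, star_smul, star_def, Complex.conj_I, add_mul, mul_add, mul_add]
  rw [smul_mul_assoc, smul_mul_assoc, mul_smul_comm, mul_smul_comm, smul_smul]
  rw [neg_mul, Complex.I_mul_I, neg_neg, one_smul]
  module

end SPUAux

/-- **SPU maps are deterministically reasonable.** Let `ω : A → C` and `F : B → A` be SPU maps
between unital C*-algebras over `ℂ`, and let `G : B → A` be a unital ⋆-algebra homomorphism
with `F b - G b` in the right nullspace `N_ω` for every `b` (so `F` is `ω`-a.e. equivalent to
the deterministic map `G`). Then `F` is right `ω`-a.e. deterministic. -/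
theorem spu_deterministically_reasonable
    {A B C : Type*}
    [CStarAlgebra A] [PartialOrder A] [StarOrderedRing A]
    [CStarAlgebra B]
    [CStarAlgebra C] [PartialOrder C] [StarOrderedRing C]
    (ω : A →ₗ[ℂ] C) (hω1 : ω 1 = 1)
    (hωKS : ∀ a : A, star (ω a) * ω a ≤ ω (star a * a))
    (F : B →ₗ[ℂ] A) (hF1 : F 1 = 1)
    (hFKS : ∀ b : B, star (F b) * F b ≤ F (star b * b))
    (G : B →ₗ[ℂ] A) (hG1 : G 1 = 1)
    (hGmul : ∀ b b' : B, G (b * b') = G b * G b')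
    (hGstar : ∀ b : B, G (star b) = star (G b))
    (hae : ∀ b : B, ω (star (F b - G b) * (F b - G b)) = 0) :
    ∀ b c : B,
      ω (star (F (star b * c) - star (F b) * F c) * (F (star b * c) - star (F b) * F c)) = 0 := by
  -- notation for nullspace membership
  set Nmem : A → Prop := fun x => ω (star x * x) = 0 with hNmem
  have L1 : ∀ {n : A}, Nmem n → ∀ a : A, ω (star n * a) = 0 :=
    fun hn a => (null_pair ω hωKS hn a).1
  have L2 : ∀ {n : A}, Nmem n → ∀ a : A, ω (star a * n) = 0 :=
    fun hn a => (null_pair ω hωKS hn a).2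
  have ωzero : ∀ {n : A}, Nmem n → ω n = 0 := by
    intro n hn
    have := L2 hn 1
    rwa [star_one, one_mul] at this
  -- closure properties of the nullspace
  have null_add : ∀ {u v : A}, Nmem u → Nmem v → Nmem (u + v) := by
    intro u v hu hv
    have key : star (u + v) * (u + v)
        = star u * u + star u * v + star v * u + star v * v := by
      rw [star_add]; noncomm_ring
    show ω _ = 0
    rw [key, map_add, map_add, map_add, hu, hv, L1 hu v, L1 hv u]
    simp
  have null_smul : ∀ (t : ℂ) {u : A}, Nmem u → Nmem (t • u) := by
    intro t u hu
    show ω _ = 0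
    rw [star_smul, smul_mul_smul_comm, map_smul, hu, smul_zero]
  have null_sub : ∀ {u v : A}, Nmem u → Nmem v → Nmem (u - v) := by
    intro u v hu hv
    have := null_add hu (null_smul (-1 : ℂ) hv)
    rwa [neg_one_smul, ← sub_eq_add_neg] at this
  -- the Schwarz defects of F are in the nullspace
  have Δnull : ∀ s : B, Nmem (F (star s * s) - star (F s) * F s) := by
    intro s
    set Δ := F (star s * s) - star (F s) * F s with hΔdef
    have hΔpos : 0 ≤ Δ := sub_nonneg.2 (hFKS s)
    have hωΔ : ω Δ = 0 := by
      have e1 : ω (F (star s * s)) = ω (star (G s) * G s) := by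
        have h0 : ω (F (star s * s) - G (star s * s)) = 0 := ωzero (hae _)
        rw [map_sub, sub_eq_zero] at h0
        rw [h0, hGmul, hGstar]
      have e2 : ω (star (F s) * F s) = ω (star (G s) * G s) := by
        have hdecomp : star (F s) * F s
            = star (G s) * G s + star (G s) * (F s - G s) + star (F s - G s) * G s
              + star (F s - G s) * (F s - G s) := by
          rw [star_sub]; noncomm_ring
        rw [hdecomp, map_add, map_add, map_add, L2 (hae s) (G s), L1 (hae s) (G s), hae s]
        simp
      rw [hΔdef, map_sub, e1, e2, sub_self]
    set q := CFC.sqrt Δ with hqdef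
    have hq : 0 ≤ q := CFC.sqrt_nonneg (a := Δ)
    have hqq : q * q = Δ := CFC.sqrt_mul_sqrt_self Δ hΔpos
    have hqs : star q = q := IsSelfAdjoint.of_nonneg hq
    have hqn : Nmem q := by
      show ω _ = 0
      rw [hqs, hqq]; exact hωΔ
    show ω _ = 0
    have key : star Δ * Δ = star (q * (q * q)) * q := by
      rw [← hqq]; simp only [star_mul, hqs]; rw [mul_assoc, mul_assoc, mul_assoc]
    rw [key]
    exact L2 hqn _
  -- polarization
  have Knull : ∀ x y : B, Nmem (F (star x * y) - star (F x) * F y) := by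
    intro x y
    have Δexp1 : F (star (x + y) * (x + y)) - star (F (x + y)) * F (x + y)
        = (F (star x * x) - star (F x) * F x) + (F (star y * y) - star (F y) * F y)
          + ((F (star x * y) - star (F x) * F y) + (F (star y * x) - star (F y) * F x)) := by
      simp only [star_add, add_mul, mul_add, map_add]
      abel
    have S1 : Nmem ((F (star x * y) - star (F x) * F y)
        + (F (star y * x) - star (F y) * F x)) := by
      have h0 := null_sub (null_sub (Δnull (x + y)) (Δnull x)) (Δnull y)
      have e : F (star (x + y) * (x + y)) - star (F (x + y)) * F (x + y)
          - (F (star x * x) - star (F x) * F x) - (F (star y * y) - star (F y) * F y)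
          = (F (star x * y) - star (F x) * F y) + (F (star y * x) - star (F y) * F x) := by
        rw [Δexp1]; abel
      rwa [e] at h0
    have Δexp2 : F (star (x + I • y) * (x + I • y)) - star (F (x + I • y)) * F (x + I • y)
        = (F (star x * x) - star (F x) * F x) + (F (star y * y) - star (F y) * F y)
          + (I • (F (star x * y) - star (F x) * F y)
            - I • (F (star y * x) - star (F y) * F x)) := by
      have h1 := star_add_I_smul_mul x y
      have h2 : star (F (x + (I : ℂ) • y)) * F (x + (I : ℂ) • y)
          = star (F x) * F x + I • (star (F x) * F y) - I • (star (F y) * F x)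
            + star (F y) * F y := by
        rw [map_add, map_smul]; exact star_add_I_smul_mul (F x) (F y)
      rw [h1, h2, map_add, map_sub, map_add, map_smul, map_smul, smul_sub, smul_sub]
      abel
    have S2 : Nmem (I • (F (star x * y) - star (F x) * F y)
        - I • (F (star y * x) - star (F y) * F x)) := by
      have h0 := null_sub (null_sub (Δnull (x + I • y)) (Δnull x)) (Δnull y)
      have e : F (star (x + I • y) * (x + I • y)) - star (F (x + I • y)) * F (x + I • y)
          - (F (star x * x) - star (F x) * F x) - (F (star y * y) - star (F y) * F y)
          = I • (F (star x * y) - star (F x) * F y)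
            - I • (F (star y * x) - star (F y) * F x) := by
        rw [Δexp2]; abel
      rwa [e] at h0
    have S2' : Nmem ((F (star x * y) - star (F x) * F y)
        - (F (star y * x) - star (F y) * F x)) := by
      have h0 := null_smul (-I) S2
      have e : (-I : ℂ) • (I • (F (star x * y) - star (F x) * F y)
          - I • (F (star y * x) - star (F y) * F x))
          = (F (star x * y) - star (F x) * F y) - (F (star y * x) - star (F y) * F x) := by
        rw [smul_sub, smul_smul, smul_smul, neg_mul, Complex.I_mul_I, neg_neg, one_smul, one_smul]
      rwa [e] at h0
    have Stot := null_add S1 S2'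
    have e2 : (F (star x * y) - star (F x) * F y) + (F (star y * x) - star (F y) * F x)
        + ((F (star x * y) - star (F x) * F y) - (F (star y * x) - star (F y) * F x))
        = (2 : ℂ) • (F (star x * y) - star (F x) * F y) := by
      module
    rw [e2] at Stot
    have := null_smul ((2 : ℂ)⁻¹) Stot
    rwa [smul_smul, inv_mul_cancel₀ (two_ne_zero), one_smul] at this
  intro b c
  exact Knull b c
end

section
/- Almost-everywhere uniqueness of Bayes maps: let A, B, C be unital C*-algebras over ℂ, let ω : A → C and F : B → A be linear maps, and set ξ := ω ∘ F. (1) If G, G' : A → B both satisfy the Bayes condition for (F, ω, ξ), then ξ ((G a − G' a) * b) = 0 for all a ∈ A and b ∈ B. (2) If moreover G and G' are ⋆-preserving, then G a − G' a ∈ N_ξ for every a ∈ A, i.e. ξ (star (G a − G' a) * (G a − G' a)) = 0 for all a. -/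
/-- **A.e. uniqueness of Bayes maps.** Let `ω : A → C` and `F : B → A` be linear maps between
unital C*-algebras over `ℂ` and `ξ := ω ∘ F`. (1) If `G, G' : A → B` both satisfy the Bayes
condition for `(F, ω, ξ)`, then `ξ ((G a - G' a) * b) = 0` for all `a, b`. (2) If moreover `G`
and `G'` are ⋆-preserving, then `G a - G' a` lies in the right nullspace `N_ξ` for every `a`. -/
theorem bayes_map_ae_unique
    {A B C : Type*} [CStarAlgebra A] [CStarAlgebra B] [CStarAlgebra C]
    (ω : A →ₗ[ℂ] C) (F : B →ₗ[ℂ] A)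
    (ξ : B →ₗ[ℂ] C) (hξ : ∀ b : B, ξ b = ω (F b))
    (G G' : A →ₗ[ℂ] B)
    (hBayes : ∀ (a : A) (b : B), ξ (G a * b) = ω (a * F b))
    (hBayes' : ∀ (a : A) (b : B), ξ (G' a * b) = ω (a * F b)) :
    (∀ (a : A) (b : B), ξ ((G a - G' a) * b) = 0) ∧
      ((∀ a : A, G (star a) = star (G a)) → (∀ a : A, G' (star a) = star (G' a)) →
        ∀ a : A, ξ (star (G a - G' a) * (G a - G' a)) = 0) := by
  have h1 : ∀ (a : A) (b : B), ξ ((G a - G' a) * b) = 0 := by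
    intro a b
    rw [sub_mul, map_sub, hBayes, hBayes', sub_self]
  refine ⟨h1, fun hG hG' a => ?_⟩
  have : star (G a - G' a) = G (star a) - G' (star a) := by
    rw [hG, hG', star_sub]
  rw [this]
  exact h1 (star a) (G a - G' a)
end

section
/- Compositionality of Bayesian inversion: let A, B, C, D be unital C*-algebras over ℂ, let ω : A → C, F : B → A, and G : D → B be linear maps, and set ξ := ω ∘ F and ζ := ξ ∘ G. If Ḡ : A → B satisfies ξ (Ḡ a * b) = ω (a * F b) for all a ∈ A, b ∈ B, and H̄ : B → D satisfies ζ (H̄ b * d) = ξ (b * G d) for all b ∈ B, d ∈ D, then H̄ ∘ Ḡ satisfies ζ (H̄ (Ḡ a) * d) = ω (a * F (G d)) for all a ∈ A and d ∈ D, i.e. H̄ ∘ Ḡ is a Bayes map for (F ∘ G, ω, ζ). -/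
/-- **Compositionality of Bayesian inversion.** Let `ω : A → C`, `F : B → A`, `G : D → B` be
linear maps between unital C*-algebras over `ℂ`, with `ξ := ω ∘ F` and `ζ := ξ ∘ G`. If
`Ḡ : A → B` is a Bayes map for `(F, ω, ξ)` and `H̄ : B → D` is a Bayes map for `(G, ξ, ζ)`,
then `H̄ ∘ Ḡ` is a Bayes map for `(F ∘ G, ω, ζ)`. -/
theorem bayes_maps_compose
    {A B C D : Type*} [CStarAlgebra A] [CStarAlgebra B] [CStarAlgebra C] [CStarAlgebra D]
    (ω : A →ₗ[ℂ] C) (F : B →ₗ[ℂ] A) (G : D →ₗ[ℂ] B)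
    (ξ : B →ₗ[ℂ] C) (hξ : ∀ b : B, ξ b = ω (F b))
    (ζ : D →ₗ[ℂ] C) (hζ : ∀ d : D, ζ d = ξ (G d))
    (Gbar : A →ₗ[ℂ] B)
    (hGbar : ∀ (a : A) (b : B), ξ (Gbar a * b) = ω (a * F b))
    (Hbar : B →ₗ[ℂ] D)
    (hHbar : ∀ (b : B) (d : D), ζ (Hbar b * d) = ξ (b * G d)) :
    ∀ (a : A) (d : D), ζ (Hbar (Gbar a) * d) = ω (a * F (G d)) := by
  intro a d
  rw [hHbar, hGbar]
end

section
/- A Bayes map for an a.e. deterministic map is a disintegration: let A and B be unital C*-algebras over ℂ, let ω : A → ℂ be a state on A, let F : B → A be a unital linear map such that F (b * c) − F b * F c ∈ N_ω for all b, c ∈ B (F is ω-a.e. deterministic), set ξ := ω ∘ F, and let G : A → B be a linear map satisfying ξ (G a * b) = ω (a * F b) for all a ∈ A and b ∈ B. Then ξ (G a) = ω a for every a ∈ A and ξ (G (F b) * c) = ξ (b * c) for all b, c ∈ B; that is, G is a disintegration of (F, ω, ξ). -/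
open scoped ComplexOrder

private lemma key_sum {A : Type*}
    [CStarAlgebra A] [PartialOrder A] [StarOrderedRing A]
    (ω : A →ₗ[ℂ] ℂ) (hω1 : ω 1 = 1) (hωpos : ∀ a : A, 0 ≤ a → 0 ≤ ω a)
    (e : A) (he : ω (star e * e) = 0) : ω e + ω (star e) = 0 := by
  set s : ℂ := ω e + ω (star e) with hs
  have hval : ∀ t : ℝ, (0:ℂ) ≤ 1 + (t:ℂ) * s := by
    intro t
    have h0 : (0:ℂ) ≤ ω (star (1 + (t:ℂ) • e) * (1 + (t:ℂ) • e)) :=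
      hωpos _ (star_mul_self_nonneg _)
    have hst : star ((t:ℂ) • e) = (t:ℂ) • star e := by
      simp [star_smul, Complex.star_def, Complex.conj_ofReal]
    have hexp : ω (star (1 + (t:ℂ) • e) * (1 + (t:ℂ) • e)) = 1 + (t:ℂ) * s := by
      simp only [star_add, star_one, hst, add_mul, one_mul, mul_add, mul_one,
        smul_mul_smul_comm, map_add, map_smul, hω1, he, smul_eq_mul, mul_zero, hs]
      ring
    rwa [hexp] at h0
  have him : s.im = 0 := by
    have := hval 1
    have h := (Complex.le_def.mp this).2
    simpa using h.symm
  have hre : s.re = 0 := by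
    by_contra h
    have h2 := hval (-2 / s.re)
    have hle := (Complex.le_def.mp h2).1
    simp [Complex.add_re, Complex.mul_re, him] at hle
    rw [div_mul_cancel₀ _ h] at hle
    norm_num at hle
  exact Complex.ext hre him

private lemma omega_eq_zero {A : Type*}
    [CStarAlgebra A] [PartialOrder A] [StarOrderedRing A]
    (ω : A →ₗ[ℂ] ℂ) (hω1 : ω 1 = 1) (hωpos : ∀ a : A, 0 ≤ a → 0 ≤ ω a)
    (d : A) (hd : ω (star d * d) = 0) : ω d = 0 := by
  have h1 : ω d + ω (star d) = 0 := key_sum ω hω1 hωpos d hd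
  have hd2 : ω (star (Complex.I • d) * (Complex.I • d)) = 0 := by
    have : star (Complex.I • d) * (Complex.I • d) = star d * d := by
      rw [star_smul, smul_mul_smul_comm]
      simp [Complex.star_def]
    rw [this, hd]
  have h2 := key_sum ω hω1 hωpos (Complex.I • d) hd2
  rw [map_smul, star_smul, map_smul] at h2
  have h2' : ω d - ω (star d) = 0 := by
    have hI : Complex.I * (ω d - ω (star d)) = 0 := by
      simp [Complex.star_def, smul_eq_mul] at h2
      linear_combination h2
    rcases mul_eq_zero.mp hI with h | h
    · exact absurd h Complex.I_ne_zero
    · exact h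
  linear_combination (h1 + h2') / 2

/-- **A Bayes map for an a.e. deterministic map is a disintegration.** Let `ω : A → ℂ` be a
state on a unital C*-algebra `A` over `ℂ`, let `F : B → A` be a unital linear map that is
`ω`-a.e. deterministic (`F (b * c) - F b * F c ∈ N_ω` for all `b, c`), set `ξ := ω ∘ F`, and
let `G : A → B` satisfy the Bayes condition `ξ (G a * b) = ω (a * F b)`. Then `ξ ∘ G = ω` and
`ξ (G (F b) * c) = ξ (b * c)` for all `b, c`, i.e. `G` is a disintegration of `(F, ω, ξ)`. -/

theorem bayes_map_of_ae_deterministic_is_disintegration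
    {A B : Type*}
    [CStarAlgebra A] [PartialOrder A] [StarOrderedRing A]
    [CStarAlgebra B]
    (ω : A →ₗ[ℂ] ℂ) (hω1 : ω 1 = 1) (hωpos : ∀ a : A, 0 ≤ a → 0 ≤ ω a)
    (F : B →ₗ[ℂ] A) (hF1 : F 1 = 1)
    (hFdet : ∀ b c : B, ω (star (F (b * c) - F b * F c) * (F (b * c) - F b * F c)) = 0)
    (ξ : B →ₗ[ℂ] ℂ) (hξ : ∀ b : B, ξ b = ω (F b))
    (G : A →ₗ[ℂ] B)
    (hBayes : ∀ (a : A) (b : B), ξ (G a * b) = ω (a * F b)) :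
    (∀ a : A, ξ (G a) = ω a) ∧ (∀ b c : B, ξ (G (F b) * c) = ξ (b * c)) := by
  constructor
  · intro a
    have := hBayes a 1
    rwa [mul_one, hF1, mul_one] at this
  · intro b c
    have hdiff : ω (F (b * c)) - ω (F b * F c) = 0 := by
      have := omega_eq_zero ω hω1 hωpos _ (hFdet b c)
      rwa [map_sub] at this
    rw [hBayes, hξ]
    linear_combination -hdiff
end

section
/- Relative Multiplication Lemma: let A, B, C be unital C*-algebras over ℂ, let G : A → B be an SPU map, and let ξ : B → C be a positive linear map. Suppose a ∈ A satisfies ξ (G (star a * a) − star (G a) * G a) = 0. Then ξ (G (star a * d) − star (G a) * G d) = 0 and ξ (G (star d * a) − star (G d) * G a) = 0 for every d ∈ A. -/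
section helpers
variable {C : Type*} [CStarAlgebra C] [PartialOrder C] [StarOrderedRing C]

lemma rsmul_nonneg {r : ℝ} (hr : 0 ≤ r) {w : C} (hw : 0 ≤ w) : 0 ≤ (r : ℂ) • w := by
  have h : (r : ℂ) • w = star (((Real.sqrt r : ℂ)) • (1:C)) * w * (((Real.sqrt r : ℂ)) • (1:C)) := by
    simp [star_smul, smul_mul_assoc, mul_smul_comm, smul_smul, ← Complex.ofReal_mul,
      Real.mul_self_sqrt hr, mul_comm]
  rw [h]
  exact star_left_conjugate_nonneg hw _

lemma nonneg_of_rsmul {t : ℝ} (ht : 0 < t) {v : C} (h : 0 ≤ (t : ℂ) • v) : 0 ≤ v := by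
  have := rsmul_nonneg (le_of_lt (inv_pos.mpr ht)) h
  rwa [smul_smul, ← Complex.ofReal_mul, inv_mul_cancel₀ ht.ne', Complex.ofReal_one, one_smul] at this

lemma eq_zero_of_squeeze {v w : C}
    (h1 : ∀ t : ℝ, 0 < t → 0 ≤ v + (t : ℂ) • w)
    (h2 : ∀ t : ℝ, 0 < t → 0 ≤ -v + (t : ℂ) • w) : v = 0 := by
  rw [← norm_eq_zero]
  have key : ∀ t : ℝ, 0 < t → ‖v‖ ≤ 3 * t * ‖w‖ := by
    intro t ht
    have hpos : 0 ≤ v + (t : ℂ) • w := h1 t ht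
    have hle : v + (t : ℂ) • w ≤ ((2*t : ℝ) : ℂ) • w := by
      have := h2 t ht
      rw [← sub_nonneg]
      have : ((2*t:ℝ):ℂ) • w - (v + (t:ℂ) • w) = -v + (t:ℂ) • w := by
        push_cast; module
      rw [this]
      exact h2 t ht
    have hn1 : ‖v + (t:ℂ) • w‖ ≤ ‖((2*t:ℝ):ℂ) • w‖ :=
      CStarAlgebra.norm_le_norm_of_nonneg_of_le hpos hle
    calc ‖v‖ = ‖v + (t:ℂ) • w - (t:ℂ) • w‖ := by rw [add_sub_cancel_right]
      _ ≤ ‖v + (t:ℂ) • w‖ + ‖(t:ℂ) • w‖ := norm_sub_le _ _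
      _ ≤ ‖((2*t:ℝ):ℂ) • w‖ + ‖(t:ℂ) • w‖ := by gcongr
      _ ≤ 3 * t * ‖w‖ := by
          rw [norm_smul, norm_smul]
          simp [abs_of_pos ht, Complex.norm_real, abs_of_pos (by linarith : (0:ℝ) < 2*t)]
          nlinarith [norm_nonneg w]
  by_contra hv
  have hv' : 0 < ‖v‖ := lt_of_le_of_ne (norm_nonneg v) (Ne.symm hv)
  rcases le_or_gt ‖w‖ 0 with hw | hw
  · have := key 1 one_pos
    nlinarith
  · have := key (‖v‖ / (6 * ‖w‖)) (by positivity)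
    have h6 : 3 * (‖v‖ / (6 * ‖w‖)) * ‖w‖ = ‖v‖ / 2 := by field_simp; ring
    rw [h6] at this
    linarith

end helpers

/-- **The relative Multiplication Lemma.** Let `G : A → B` be an SPU map and `ξ : B → C` a
positive linear map between unital C*-algebras over `ℂ`. If `a ∈ A` satisfies
`ξ (G (star a * a) - star (G a) * G a) = 0`, then
`ξ (G (star a * d) - star (G a) * G d) = 0` and `ξ (G (star d * a) - star (G d) * G a) = 0`
for every `d ∈ A`. -/
theorem relative_multiplication_lemma
    {A B C : Type*}
    [CStarAlgebra A]
    [CStarAlgebra B] [PartialOrder B] [StarOrderedRing B]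
    [CStarAlgebra C] [PartialOrder C] [StarOrderedRing C]
    (G : A →ₗ[ℂ] B) (hG1 : G 1 = 1)
    (hGKS : ∀ a : A, star (G a) * G a ≤ G (star a * a))
    (ξ : B →ₗ[ℂ] C) (hξpos : ∀ b : B, 0 ≤ b → 0 ≤ ξ b)
    (a : A) (ha : ξ (G (star a * a) - star (G a) * G a) = 0) :
    ∀ d : A,
      ξ (G (star a * d) - star (G a) * G d) = 0 ∧
      ξ (G (star d * a) - star (G d) * G a) = 0 := by
  intro d
  set φ : A → A → C := fun x y => ξ (G (star x * y) - star (G x) * G y) with hφ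
  have hpos : ∀ x, 0 ≤ φ x x := fun x => hξpos _ (sub_nonneg.mpr (hGKS x))
  have hexp : ∀ c : ℂ, φ (a + c • d) (a + c • d) =
      φ a a + (starRingEnd ℂ c) • φ d a + c • φ a d + ((starRingEnd ℂ c) * c) • φ d d := by
    intro c
    simp only [hφ]
    rw [← map_smul ξ, ← map_smul ξ, ← map_smul ξ, ← map_add, ← map_add, ← map_add]
    congr 1
    simp only [star_add, star_smul, add_mul, mul_add, smul_mul_assoc, mul_smul_comm,
      map_add, map_smul, smul_sub, smul_smul, star_smul, ← starRingEnd_apply]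
    module
  have hφaa : φ a a = 0 := ha
  -- h := φ a d + φ d a
  have hre : φ a d + φ d a = 0 := by
    apply eq_zero_of_squeeze (w := φ d d)
    · intro t ht
      have := hpos (a + (t:ℂ) • d)
      rw [hexp (t:ℂ), hφaa] at this
      simp only [Complex.conj_ofReal, zero_add] at this
      have h' : (t:ℂ) • ((φ a d + φ d a) + (t:ℂ) • φ d d) =
          (t:ℂ) • φ d a + (t:ℂ) • φ a d + ((t:ℂ) * (t:ℂ)) • φ d d := by
        module
      rw [← h'] at this
      exact nonneg_of_rsmul ht this
    · intro t ht
      have := hpos (a + (-t:ℂ) • d)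
      rw [hexp (-t:ℂ), hφaa] at this
      have hc : (starRingEnd ℂ) (-t:ℂ) = (-t:ℂ) := by
        rw [← Complex.ofReal_neg]; exact Complex.conj_ofReal _
      rw [hc, zero_add] at this
      have h' : (t:ℂ) • (-(φ a d + φ d a) + (t:ℂ) • φ d d) =
          (-t:ℂ) • φ d a + (-t:ℂ) • φ a d + ((-t:ℂ) * (-t:ℂ)) • φ d d := by
        module
      rw [← h'] at this
      exact nonneg_of_rsmul ht this
  have him : Complex.I • φ a d - Complex.I • φ d a = 0 := by
    apply eq_zero_of_squeeze (w := φ d d)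
    · intro t ht
      have := hpos (a + ((t:ℂ) * Complex.I) • d)
      rw [hexp _, hφaa] at this
      have hc : (starRingEnd ℂ) ((t:ℂ) * Complex.I) = -((t:ℂ) * Complex.I) := by
        simp [Complex.conj_ofReal]
      rw [hc, zero_add] at this
      have h' : (t:ℂ) • ((Complex.I • φ a d - Complex.I • φ d a) + (t:ℂ) • φ d d) =
          (-((t:ℂ) * Complex.I)) • φ d a + ((t:ℂ) * Complex.I) • φ a d
            + ((-((t:ℂ) * Complex.I)) * ((t:ℂ) * Complex.I)) • φ d d := by
        have : (-((t:ℂ) * Complex.I)) * ((t:ℂ) * Complex.I) = (t:ℂ) * (t:ℂ) := by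
          ring_nf; simp [Complex.I_sq]
        rw [this]; module
      rw [← h'] at this
      exact nonneg_of_rsmul ht this
    · intro t ht
      have := hpos (a + (-((t:ℂ) * Complex.I)) • d)
      rw [hexp _, hφaa] at this
      have hc : (starRingEnd ℂ) (-((t:ℂ) * Complex.I)) = (t:ℂ) * Complex.I := by
        simp [Complex.conj_ofReal]
      rw [hc, zero_add] at this
      have h' : (t:ℂ) • (-(Complex.I • φ a d - Complex.I • φ d a) + (t:ℂ) • φ d d) =
          ((t:ℂ) * Complex.I) • φ d a + (-((t:ℂ) * Complex.I)) • φ a d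
            + (((t:ℂ) * Complex.I) * (-((t:ℂ) * Complex.I))) • φ d d := by
        have : ((t:ℂ) * Complex.I) * (-((t:ℂ) * Complex.I)) = (t:ℂ) * (t:ℂ) := by
          ring_nf; simp [Complex.I_sq]
        rw [this]; module
      rw [← h'] at this
      exact nonneg_of_rsmul ht this
  constructor
  · have : φ a d = (2:ℂ)⁻¹ • ((φ a d + φ d a) + (-Complex.I) • (Complex.I • φ a d - Complex.I • φ d a)) := by
      rw [smul_sub, smul_smul, smul_smul]
      simp [Complex.I_mul_I]
      module
    rw [hre, him] at this
    simp only [smul_zero, add_zero, zero_add] at this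
    exact this
  · have : φ d a = (2:ℂ)⁻¹ • ((φ a d + φ d a) + Complex.I • (Complex.I • φ a d - Complex.I • φ d a)) := by
      rw [smul_sub, smul_smul, smul_smul]
      simp [Complex.I_mul_I]
      module
    rw [hre, him] at this
    simp only [smul_zero, add_zero, zero_add] at this
    exact this
end

section
/- Relative conditional expectation property: let A, B, C be unital C*-algebras over ℂ, let ξ : B → C be a positive ⋆-preserving linear map, and let F : B → A and G : A → B be SPU maps such that ξ (x * (G (F b) − b)) = 0 for all x, b ∈ B (G ∘ F is ξ-a.e. the identity). Then for every b ∈ B the following equalities hold: ξ (star b * b) = ξ (star (G (F b)) * G (F b)) = ξ (G (star (F b) * F b)) = ξ (G (F (star b * b))). -/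
lemma spu_pos {A B : Type*}
    [CStarAlgebra A] [PartialOrder A] [StarOrderedRing A]
    [CStarAlgebra B] [PartialOrder B] [StarOrderedRing B]
    (G : A →ₗ[ℂ] B)
    (hGKS : ∀ a : A, star (G a) * G a ≤ G (star a * a)) :
    ∀ a : A, 0 ≤ a → 0 ≤ G a := by
  intro a ha
  rw [StarOrderedRing.nonneg_iff] at ha
  induction ha using AddSubmonoid.closure_induction with
  | mem x hx =>
    obtain ⟨s, rfl⟩ := hx
    exact le_trans (star_mul_self_nonneg (G s)) (hGKS s)
  | zero => simp
  | add x y _ _ hx hy => rw [map_add]; exact add_nonneg hx hy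

/-- **The relative conditional expectation property.** Let `ξ : B → C` be a positive
⋆-preserving linear map between unital C*-algebras over `ℂ`, and let `F : B → A` and
`G : A → B` be SPU maps with `G ∘ F` being `ξ`-a.e. the identity, in the sense that
`ξ (x * (G (F b) - b)) = 0` for all `x, b ∈ B`. Then for every `b ∈ B`:
`ξ (star b * b) = ξ (star (G (F b)) * G (F b)) = ξ (G (star (F b) * F b)) = ξ (G (F (star b * b)))`. -/
theorem relative_conditional_expectation_property
    {A B C : Type*}
    [CStarAlgebra A] [PartialOrder A] [StarOrderedRing A]
    [CStarAlgebra B] [PartialOrder B] [StarOrderedRing B]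
    [CStarAlgebra C] [PartialOrder C] [StarOrderedRing C]
    (ξ : B →ₗ[ℂ] C) (hξpos : ∀ b : B, 0 ≤ b → 0 ≤ ξ b)
    (hξstar : ∀ b : B, ξ (star b) = star (ξ b))
    (F : B →ₗ[ℂ] A) (hF1 : F 1 = 1)
    (hFKS : ∀ b : B, star (F b) * F b ≤ F (star b * b))
    (G : A →ₗ[ℂ] B) (hG1 : G 1 = 1)
    (hGKS : ∀ a : A, star (G a) * G a ≤ G (star a * a))
    (hae : ∀ x b : B, ξ (x * (G (F b) - b)) = 0) :
    ∀ b : B,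
      ξ (star b * b) = ξ (star (G (F b)) * G (F b)) ∧
      ξ (star (G (F b)) * G (F b)) = ξ (G (star (F b) * F b)) ∧
      ξ (G (star (F b) * F b)) = ξ (G (F (star b * b))) := by
  intro b
  have hGmono : ∀ x y : A, x ≤ y → G x ≤ G y := by
    intro x y hxy
    have h := spu_pos G hGKS (y - x) (sub_nonneg.mpr hxy)
    rw [map_sub] at h
    exact sub_nonneg.mp h
  have hξmono : ∀ x y : B, x ≤ y → ξ x ≤ ξ y := by
    intro x y hxy
    have h := hξpos (y - x) (sub_nonneg.mpr hxy)
    rw [map_sub] at h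
    exact sub_nonneg.mp h
  -- first equality
  have h1 : ξ (star b * b) = ξ (star (G (F b)) * G (F b)) := by
    have key : star (G (F b)) * G (F b) - star b * b
        = star (G (F b)) * (G (F b) - b) + star (star b * (G (F b) - b)) := by
      simp only [star_mul, star_star, star_sub, mul_sub, sub_mul]
      abel
    have h2 : ξ (star (G (F b)) * G (F b) - star b * b) = 0 := by
      rw [key, map_add, hae, hξstar, hae]
      simp
    rw [map_sub, sub_eq_zero] at h2
    exact h2.symm
  -- last equality
  have hlast : ξ (G (F (star b * b))) = ξ (star b * b) := by
    have h := hae 1 (star b * b)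
    rw [one_mul, map_sub, sub_eq_zero] at h
    exact h
  -- chain of inequalities
  have hA : ξ (star (G (F b)) * G (F b)) ≤ ξ (G (star (F b) * F b)) :=
    hξmono _ _ (hGKS (F b))
  have hB : ξ (G (star (F b) * F b)) ≤ ξ (G (F (star b * b))) :=
    hξmono _ _ (hGmono _ _ (hFKS b))
  have hA' : ξ (G (star (F b) * F b)) = ξ (star b * b) :=
    le_antisymm (hlast ▸ hB) (h1 ▸ hA)
  refine ⟨h1, ?_, ?_⟩
  · rw [← h1, hA']
  · rw [hA', hlast]
end

section
/- Composition of almost-everywhere equivalence classes of SPU maps: let A, B, D, E be unital C*-algebras over ℂ, let ω : A → E be an SPU map, let F, F' : B → A be SPU maps with F b − F' b ∈ N_ω for every b ∈ B, set ξ := ω ∘ F, and let G, G' : D → B be SPU maps with G d − G' d ∈ N_ξ for every d ∈ D. Then F (G d) − F' (G' d) ∈ N_ω for every d ∈ D. -/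
section aux
variable {A E : Type*}
    [CStarAlgebra A] [PartialOrder A] [StarOrderedRing A]
    [CStarAlgebra E] [PartialOrder E] [StarOrderedRing E]

lemma spu_pos_s18 (ω : A →ₗ[ℂ] E)
    (hωKS : ∀ a : A, star (ω a) * ω a ≤ ω (star a * a)) :
    ∀ x : A, 0 ≤ x → 0 ≤ ω x := by
  intro x hx
  rw [StarOrderedRing.nonneg_iff] at hx
  induction hx using AddSubmonoid.closure_induction with
  | mem y hy =>
      obtain ⟨s, rfl⟩ := hy
      exact le_trans (star_mul_self_nonneg _) (hωKS s)
  | zero => simp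
  | add a b _ _ ha hb => rw [map_add]; exact add_nonneg ha hb

lemma spu_monotone (ω : A →ₗ[ℂ] E)
    (hωKS : ∀ a : A, star (ω a) * ω a ≤ ω (star a * a)) {x y : A}
    (h : x ≤ y) : ω x ≤ ω y := by
  have h2 := spu_pos_s18 ω hωKS (y - x) (sub_nonneg.mpr h)
  rw [map_sub] at h2
  exact sub_nonneg.mp h2

/-- The key expansion: for real `t`,
`star (a + t•n) * (a + t•n) = star a * a + t • (star a * n + star n * a) + (t*t) • (star n * n)`. -/
lemma expand_sq (a n : A) (t : ℝ) :
    star (a + (t : ℂ) • n) * (a + (t : ℂ) • n)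
      = star a * a + (t : ℂ) • (star a * n + star n * a)
        + ((t : ℂ) * (t : ℂ)) • (star n * n) := by
  simp only [star_add, star_smul, Complex.star_def, Complex.conj_ofReal, add_mul, mul_add,
    smul_mul_assoc, mul_smul_comm, smul_smul, smul_add]
  abel

lemma spu_null_sum (ω : A →ₗ[ℂ] E)
    (hωKS : ∀ a : A, star (ω a) * ω a ≤ ω (star a * a))
    (n : A) (hn : ω (star n * n) = 0) (a : A) :
    ω (star a * n) + ω (star n * a) = 0 := by
  set s : E := ω (star a * n) + ω (star n * a) with hs
  set c : E := ω (star a * a) with hc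
  have hcpos : 0 ≤ c := spu_pos_s18 ω hωKS _ (star_mul_self_nonneg a)
  have key : ∀ t : ℝ, 0 ≤ c + (t : ℂ) • s := by
    intro t
    have h0 : (0 : E) ≤ ω (star (a + (t : ℂ) • n) * (a + (t : ℂ) • n)) :=
      spu_pos_s18 ω hωKS _ (star_mul_self_nonneg _)
    rw [expand_sq a n t] at h0
    simpa [hn, map_add, map_smul, hs, hc, smul_add] using h0
  by_contra hsne
  have hsnorm : 0 < ‖s‖ := by
    simp only [norm_pos_iff]
    exact fun h => hsne (by rw [hs] at h ⊢; rw [h])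
  set t : ℝ := (3 * ‖c‖ + 1) / ‖s‖ with ht
  have htpos : 0 < t := by positivity
  have h1 : 0 ≤ c + (t : ℂ) • s := key t
  have h2 : 0 ≤ c - (t : ℂ) • s := by
    have := key (-t)
    rw [Complex.ofReal_neg, neg_smul] at this
    simpa [sub_eq_add_neg] using this
  -- 0 ≤ c + t•s ≤ c + c
  have hle : c + (t : ℂ) • s ≤ c + c := by
    have : (t : ℂ) • s ≤ c := sub_nonneg.mp h2
    exact add_le_add_right this c
  have hnorm1 : ‖c + (t : ℂ) • s‖ ≤ ‖c + c‖ :=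
    CStarAlgebra.norm_le_norm_of_nonneg_of_le h1 hle
  have hnorm2 : ‖(t : ℂ) • s‖ ≤ 3 * ‖c‖ := by
    calc ‖(t : ℂ) • s‖ = ‖(c + (t : ℂ) • s) - c‖ := by
          rw [add_sub_cancel_left]
      _ ≤ ‖c + (t : ℂ) • s‖ + ‖c‖ := norm_sub_le _ _
      _ ≤ ‖c + c‖ + ‖c‖ := by linarith
      _ ≤ (‖c‖ + ‖c‖) + ‖c‖ := by linarith [norm_add_le c c]
      _ = 3 * ‖c‖ := by ring
  have : ‖(t : ℂ) • s‖ = 3 * ‖c‖ + 1 := by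
    rw [norm_smul, Complex.norm_real, Real.norm_eq_abs, abs_of_pos htpos, ht]
    field_simp
  linarith

lemma spu_null_left (ω : A →ₗ[ℂ] E)
    (hωKS : ∀ a : A, star (ω a) * ω a ≤ ω (star a * a))
    (n : A) (hn : ω (star n * n) = 0) (a : A) :
    ω (star a * n) = 0 := by
  have h1 := spu_null_sum ω hωKS n hn a
  have h2 := spu_null_sum ω hωKS n hn (Complex.I • a)
  simp only [star_smul, Complex.star_def, Complex.conj_I, neg_smul, neg_mul,
    smul_mul_assoc, mul_smul_comm, map_neg, map_smul] at h2
  -- h2 : -(I • ω (star a * n)) + I • ω (star n * a) = 0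
  have h3 : ω (star n * a) = ω (star a * n) := by
    have h4 : Complex.I • (ω (star n * a) - ω (star a * n)) = 0 := by
      rw [smul_sub]; linear_combination (norm := module) h2
    have h5 := congrArg (fun x => (-Complex.I) • x) h4
    have h6 : ω (star n * a) - ω (star a * n) = 0 := by
      simpa [smul_smul, Complex.I_mul_I] using h5
    exact sub_eq_zero.mp h6
  rw [h3] at h1
  have h5 : (2 : ℂ) • ω (star a * n) = 0 := by
    rw [two_smul]; exact h1
  simpa using h5

lemma spu_null_right (ω : A →ₗ[ℂ] E)
    (hωKS : ∀ a : A, star (ω a) * ω a ≤ ω (star a * a))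
    (n : A) (hn : ω (star n * n) = 0) (a : A) :
    ω (star n * a) = 0 := by
  have h1 := spu_null_sum ω hωKS n hn a
  have h2 := spu_null_left ω hωKS n hn a
  rw [h2, zero_add] at h1
  exact h1

end aux

/-- **A.e. equivalence classes of SPU maps compose.** Let `ω : A → E` be an SPU map between
unital C*-algebras over `ℂ`, let `F, F' : B → A` be SPU maps with `F b - F' b ∈ N_ω` for all
`b`, set `ξ := ω ∘ F`, and let `G, G' : D → B` be SPU maps with `G d - G' d ∈ N_ξ` for all
`d`. Then `F (G d) - F' (G' d) ∈ N_ω` for all `d`. -/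
theorem spu_ae_classes_compose
    {A B D E : Type*}
    [CStarAlgebra A] [PartialOrder A] [StarOrderedRing A]
    [CStarAlgebra B] [PartialOrder B] [StarOrderedRing B]
    [CStarAlgebra D]
    [CStarAlgebra E] [PartialOrder E] [StarOrderedRing E]
    (ω : A →ₗ[ℂ] E) (hω1 : ω 1 = 1)
    (hωKS : ∀ a : A, star (ω a) * ω a ≤ ω (star a * a))
    (F : B →ₗ[ℂ] A) (hF1 : F 1 = 1)
    (hFKS : ∀ b : B, star (F b) * F b ≤ F (star b * b))
    (F' : B →ₗ[ℂ] A) (hF'1 : F' 1 = 1)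
    (hF'KS : ∀ b : B, star (F' b) * F' b ≤ F' (star b * b))
    (hFF' : ∀ b : B, ω (star (F b - F' b) * (F b - F' b)) = 0)
    (ξ : B →ₗ[ℂ] E) (hξ : ∀ b : B, ξ b = ω (F b))
    (G : D →ₗ[ℂ] B) (hG1 : G 1 = 1)
    (hGKS : ∀ d : D, star (G d) * G d ≤ G (star d * d))
    (G' : D →ₗ[ℂ] B) (hG'1 : G' 1 = 1)
    (hG'KS : ∀ d : D, star (G' d) * G' d ≤ G' (star d * d))
    (hGG' : ∀ d : D, ξ (star (G d - G' d) * (G d - G' d)) = 0) :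
    ∀ d : D, ω (star (F (G d) - F' (G' d)) * (F (G d) - F' (G' d))) = 0 := by
  intro d
  set h : B := G d - G' d with hh
  set n1 : A := F (G d) - F' (G d) with hn1
  set n2 : A := F' (G d) - F' (G' d) with hn2
  -- ω kills (F - F') on everything
  have hdiff : ∀ b : B, ω (F b - F' b) = 0 := by
    intro b
    have := spu_null_left ω hωKS (F b - F' b) (hFF' b) 1
    simpa using this
  -- ω (F' (star h * h)) = 0
  have hFh : ω (F (star h * h)) = 0 := by rw [← hξ]; exact hGG' d
  have hF'h : ω (F' (star h * h)) = 0 := by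
    have := hdiff (star h * h)
    rw [map_sub, hFh, zero_sub, neg_eq_zero] at this
    exact this
  -- n2 is ω-null
  have hn2eq : n2 = F' h := by rw [hn2, hh, map_sub]
  have hn2null : ω (star n2 * n2) = 0 := by
    have hle : ω (star n2 * n2) ≤ 0 := by
      rw [hn2eq]
      calc ω (star (F' h) * F' h) ≤ ω (F' (star h * h)) :=
            spu_monotone ω hωKS (hF'KS h)
        _ = 0 := hF'h
    have hge : 0 ≤ ω (star n2 * n2) := spu_pos_s18 ω hωKS _ (star_mul_self_nonneg _)
    exact le_antisymm hle hge
  have hn1null : ω (star n1 * n1) = 0 := hFF' (G d)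
  -- difference decomposes
  have hdec : F (G d) - F' (G' d) = n1 + n2 := by rw [hn1, hn2]; abel
  rw [hdec]
  have hexp : star (n1 + n2) * (n1 + n2)
      = star n1 * n1 + star n1 * n2 + star n2 * n1 + star n2 * n2 := by
    rw [star_add, add_mul, mul_add, mul_add]; abel
  rw [hexp, map_add, map_add, map_add, hn1null, hn2null,
    spu_null_right ω hωKS n1 hn1null n2,
    spu_null_left ω hωKS n1 hn1null n2]
  simp
end

section
/- SPU maps are causal: let A, B, C, D be unital C*-algebras over ℂ and let F : A → D, G : B → A, and H, K : C → B be SPU maps. If F (G (b * (H c − K c))) = 0 for all b ∈ B and c ∈ C, then F (a * (G (b * H c) − G (b * K c))) = 0 for all a ∈ A, b ∈ B, and c ∈ C. -/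
/-- **SPU maps are causal.** Let `F : A → D`, `G : B → A`, and `H, K : C → B` be SPU maps
between unital C*-algebras over `ℂ`. If `F (G (b * (H c - K c))) = 0` for all `b ∈ B` and
`c ∈ C`, then `F (a * (G (b * H c) - G (b * K c))) = 0` for all `a ∈ A`, `b ∈ B`, `c ∈ C`. -/
theorem spu_causal
    {A B C D : Type*}
    [CStarAlgebra A] [PartialOrder A] [StarOrderedRing A]
    [CStarAlgebra B] [PartialOrder B] [StarOrderedRing B]
    [CStarAlgebra C]
    [CStarAlgebra D] [PartialOrder D] [StarOrderedRing D]
    (F : A →ₗ[ℂ] D) (hF1 : F 1 = 1)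
    (hFKS : ∀ a : A, star (F a) * F a ≤ F (star a * a))
    (G : B →ₗ[ℂ] A) (hG1 : G 1 = 1)
    (hGKS : ∀ b : B, star (G b) * G b ≤ G (star b * b))
    (H : C →ₗ[ℂ] B) (hH1 : H 1 = 1)
    (hHKS : ∀ c : C, star (H c) * H c ≤ H (star c * c))
    (K : C →ₗ[ℂ] B) (hK1 : K 1 = 1)
    (hKKS : ∀ c : C, star (K c) * K c ≤ K (star c * c))
    (hcausal : ∀ (b : B) (c : C), F (G (b * (H c - K c))) = 0) :
    ∀ (a : A) (b : B) (c : C), F (a * (G (b * H c) - G (b * K c))) = 0 := by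
  -- F is positive
  have hFpos : ∀ z : A, 0 ≤ z → 0 ≤ F z := by
    intro z hz
    rw [StarOrderedRing.nonneg_iff] at hz
    induction hz using AddSubmonoid.closure_induction with
    | mem u hu =>
      obtain ⟨s, rfl⟩ := hu
      exact le_trans (star_mul_self_nonneg (F s)) (hFKS s)
    | zero => simpa using le_refl (0 : D)
    | add u v _ _ hu hv => rw [map_add]; exact add_nonneg hu hv
  have hFmono : ∀ p q : A, p ≤ q → F p ≤ F q := by
    intro p q h
    have := hFpos (q - p) (sub_nonneg.2 h)
    rw [map_sub] at this
    exact sub_nonneg.1 this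
  intro a b c
  set e : B := H c - K c with he
  set x : A := G (b * e) with hx
  have hxeq : G (b * H c) - G (b * K c) = x := by
    rw [hx, he, mul_sub, map_sub]
  rw [hxeq]
  -- key zero
  have h0 : F (G (star (b * e) * (b * e))) = 0 := by
    have := hcausal (star (b * e) * b) c
    rw [← he] at this
    rw [← this, mul_assoc]
  -- Schwarz for G
  have hGx : star x * x ≤ G (star (b * e) * (b * e)) := hGKS (b * e)
  -- conjugate bound
  have hconj : star (a * x) * (a * x) ≤ ‖star a * a‖ • (star x * x) := by
    have h1 : star (a * x) * (a * x) = star x * (star a * a) * x := by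
      simp [star_mul, mul_assoc]
    rw [h1]
    exact CStarAlgebra.star_left_conjugate_le_norm_smul (IsSelfAdjoint.star_mul_self a)
  have hsm : ‖star a * a‖ • (star x * x) ≤ ‖star a * a‖ • G (star (b * e) * (b * e)) :=
    smul_le_smul_of_nonneg_left hGx (norm_nonneg _)
  have hF2 : F (star (a * x) * (a * x)) ≤ 0 := by
    calc F (star (a * x) * (a * x))
        ≤ F (‖star a * a‖ • G (star (b * e) * (b * e))) :=
          hFmono _ _ (le_trans hconj hsm)
      _ = ‖star a * a‖ • F (G (star (b * e) * (b * e))) := F.map_smul_of_tower _ _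
      _ = 0 := by rw [h0, smul_zero]
  have hle : star (F (a * x)) * F (a * x) ≤ 0 := le_trans (hFKS (a * x)) hF2
  have h00 : star (F (a * x)) * F (a * x) = 0 :=
    le_antisymm hle (star_mul_self_nonneg _)
  exact (CStarRing.star_mul_self_eq_zero_iff _).1 h00
end
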